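/- arXiv:2412.03393 — 7 statements merged into one kernel-verified Lean document; each statement's English description precedes it below -/
import Mathlib

section
/- Let X = ℓ²(ℕ; ℝ) and let e₀ denote the first standard basis vector. There exists a map H : [0,1] × X → X, jointly continuous (for the norm topology on X), such that for every t ∈ [0,1] the map H(t, ·) : X → X is a surjective linear isometry, H(0, x) = x for all x, and H(1, x) = x − 2⟨x, e₀⟩ e₀ for all x. That is, in the infinite-dimensional Hilbert space ℓ² the identity and a reflection are connected by a jointly continuous isotopy of surjective linear isometries. -/
open scoped RealInnerProductSpace

open scoped NNReal ENNReal

namespace Ell2Refl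

noncomputable section

local notation "X" => lp (fun _ : ℕ => ℝ) 2

lemma rp2 (a : ℝ) : a ^ ((2:ℝ≥0∞).toReal) = a ^ (2:ℕ) := by
  rw [show ((2:ℝ≥0∞).toReal) = ((2:ℕ):ℝ) by simp, Real.rpow_natCast]

lemma summable_sq (x : X) : Summable fun n => ‖(x : ∀ _ : ℕ, ℝ) n‖ ^ (2:ℕ) := by
  have h := (memℓp_gen_iff (p := 2) (by norm_num)).1 (lp.memℓp x)
  simpa only [rp2] using h

lemma memℓp_of_sq {f : ℕ → ℝ} (h : Summable fun n => ‖f n‖ ^ (2:ℕ)) : Memℓp f 2 :=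
  memℓp_gen (by simpa only [rp2] using h)

lemma norm_sq_eq (f : X) : ‖f‖ ^ (2:ℕ) = ∑' n, ‖(f : ∀ _ : ℕ, ℝ) n‖ ^ (2:ℕ) := by
  have h := lp.norm_rpow_eq_tsum (p := 2) (by norm_num) f
  simpa only [rp2] using h

lemma norm_eq_of_sq {f g : X}
    (h : (∑' n, ‖(f : ∀ _ : ℕ, ℝ) n‖ ^ (2:ℕ)) = ∑' n, ‖(g : ∀ _ : ℕ, ℝ) n‖ ^ (2:ℕ)) :
    ‖f‖ = ‖g‖ := by
  have h2 : ‖f‖ ^ (2:ℕ) = ‖g‖ ^ (2:ℕ) := by rw [norm_sq_eq, norm_sq_eq, h]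
  exact le_antisymm (le_of_pow_le_pow_left₀ two_ne_zero (norm_nonneg _) h2.le)
    (le_of_pow_le_pow_left₀ two_ne_zero (norm_nonneg _) h2.ge)

lemma norm_le_of_sq {f g : X}
    (h : (∑' n, ‖(f : ∀ _ : ℕ, ℝ) n‖ ^ (2:ℕ)) ≤ ∑' n, ‖(g : ∀ _ : ℕ, ℝ) n‖ ^ (2:ℕ)) :
    ‖f‖ ≤ ‖g‖ := by
  have h2 : ‖f‖ ^ (2:ℕ) ≤ ‖g‖ ^ (2:ℕ) := by rw [norm_sq_eq, norm_sq_eq]; exact h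
  exact le_of_pow_le_pow_left₀ two_ne_zero (norm_nonneg _) h2

lemma pair_tsum {f g : ℕ → ℝ} (hf : Summable f) (hg : Summable g)
    (h : ∀ k, f (2*k) + f (2*k+1) = g (2*k) + g (2*k+1)) : ∑' n, f n = ∑' n, g n := by
  have hf0 : Summable fun k => f (2*k) := hf.comp_injective (fun a b hab => by omega)
  have hf1 : Summable fun k => f (2*k+1) := hf.comp_injective (fun a b hab => by omega)
  have hg0 : Summable fun k => g (2*k) := hg.comp_injective (fun a b hab => by omega)
  have hg1 : Summable fun k => g (2*k+1) := hg.comp_injective (fun a b hab => by omega)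
  calc ∑' n, f n = (∑' k, f (2*k)) + ∑' k, f (2*k+1) := (tsum_even_add_odd hf0 hf1).symm
    _ = ∑' k, (f (2*k) + f (2*k+1)) := (Summable.tsum_add hf0 hf1).symm
    _ = ∑' k, (g (2*k) + g (2*k+1)) := tsum_congr h
    _ = (∑' k, g (2*k)) + ∑' k, g (2*k+1) := Summable.tsum_add hg0 hg1
    _ = ∑' n, g n := tsum_even_add_odd hg0 hg1

lemma zero_pair_tsum {f g : ℕ → ℝ} (hf : Summable f) (hg : Summable g) (h0 : f 0 = g 0)
    (h : ∀ k, f (2*k+1) + f (2*k+2) = g (2*k+1) + g (2*k+2)) : ∑' n, f n = ∑' n, g n := by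
  have hf1 : Summable fun n => f (n+1) := (summable_nat_add_iff 1).2 hf
  have hg1 : Summable fun n => g (n+1) := (summable_nat_add_iff 1).2 hg
  rw [tsum_eq_zero_add' hf1, tsum_eq_zero_add' hg1, h0]
  congr 1
  exact pair_tsum hf1 hg1 (fun k => h k)

/-! ### Coordinate operators -/

def Tf (ε : ℕ → ℝ) (σ : ℕ → ℕ) (x : ℕ → ℝ) : ℕ → ℝ := fun n => ε n * x (σ n)

lemma Tf_memℓp {ε : ℕ → ℝ} {σ : ℕ → ℕ} (hε : ∀ n, |ε n| ≤ 1)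
    (hσ : Function.Injective σ) (x : X) : Memℓp (Tf ε σ x) 2 := by
  apply memℓp_of_sq
  have hs : Summable fun n => ‖(x : ∀ _ : ℕ, ℝ) (σ n)‖ ^ (2:ℕ) :=
    (summable_sq x).comp_injective hσ
  refine Summable.of_nonneg_of_le (fun n => by positivity) (fun n => ?_) hs
  have h1 : ‖Tf ε σ x n‖ ≤ ‖(x : ∀ _ : ℕ, ℝ) (σ n)‖ := by
    rw [show Tf ε σ x n = ε n * x (σ n) from rfl, norm_mul]
    calc ‖ε n‖ * ‖(x : ∀ _ : ℕ, ℝ) (σ n)‖ ≤ 1 * ‖(x : ∀ _ : ℕ, ℝ) (σ n)‖ := by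
          apply mul_le_mul_of_nonneg_right _ (norm_nonneg _)
          simpa [Real.norm_eq_abs] using hε n
      _ = _ := one_mul _
  exact pow_le_pow_left₀ (norm_nonneg _) h1 2

def Top (ε : ℕ → ℝ) (σ : ℕ → ℕ) (hε : ∀ n, |ε n| ≤ 1) (hσ : Function.Injective σ)
    (x : X) : X := ⟨Tf ε σ x, Tf_memℓp hε hσ x⟩

variable {ε : ℕ → ℝ} {σ : ℕ → ℕ} {hε : ∀ n, |ε n| ≤ 1} {hσ : Function.Injective σ}

lemma Top_apply (x : X) (n : ℕ) :
    (Top ε σ hε hσ x : ∀ _ : ℕ, ℝ) n = ε n * x (σ n) := rfl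

lemma Top_add (x y : X) : Top ε σ hε hσ (x + y) = Top ε σ hε hσ x + Top ε σ hε hσ y := by
  apply lp.ext; funext n
  simp only [lp.coeFn_add, Pi.add_apply, Top_apply]
  ring

lemma Top_smul (r : ℝ) (x : X) : Top ε σ hε hσ (r • x) = r • Top ε σ hε hσ x := by
  apply lp.ext; funext n
  simp only [lp.coeFn_smul, Pi.smul_apply, Top_apply, smul_eq_mul]
  ring

lemma Top_sub (x y : X) : Top ε σ hε hσ (x - y) = Top ε σ hε hσ x - Top ε σ hε hσ y := by
  apply lp.ext; funext n
  simp only [lp.coeFn_sub, Pi.sub_apply, Top_apply]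
  ring

lemma Top_norm_le (x : X) : ‖Top ε σ hε hσ x‖ ≤ ‖x‖ := by
  apply norm_le_of_sq
  have hs : Summable fun n => ‖(x : ∀ _ : ℕ, ℝ) (σ n)‖ ^ (2:ℕ) :=
    (summable_sq x).comp_injective hσ
  refine le_trans (Summable.tsum_le_tsum (fun n => ?_) (summable_sq _) hs) ?_
  · rw [Top_apply, norm_mul]
    have h1 : ‖ε n‖ * ‖(x : ∀ _ : ℕ, ℝ) (σ n)‖ ≤ 1 * ‖(x : ∀ _ : ℕ, ℝ) (σ n)‖ := by
      apply mul_le_mul_of_nonneg_right _ (norm_nonneg _)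
      simpa [Real.norm_eq_abs] using hε n
    rw [one_mul] at h1
    exact pow_le_pow_left₀ (by positivity) h1 2
  · exact tsum_comp_le_tsum_of_inj (summable_sq x) (fun n => by positivity) hσ

lemma Top_continuous : Continuous (Top ε σ hε hσ) := by
  have : LipschitzWith 1 (Top ε σ hε hσ) := by
    apply LipschitzWith.of_dist_le_mul
    intro x y
    rw [dist_eq_norm, dist_eq_norm, ← Top_sub, NNReal.coe_one, one_mul]
    exact Top_norm_le _
  exact this.continuous

/-! ### The four concrete operators -/

def epsJ (n : ℕ) : ℝ := if n % 2 = 0 then -1 else 1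
def sigJ (n : ℕ) : ℕ := if n % 2 = 0 then n + 1 else n - 1
def epsK (n : ℕ) : ℝ := if n = 0 then 0 else if n % 2 = 0 then 1 else -1
def sigK (n : ℕ) : ℕ := if n = 0 then 0 else if n % 2 = 0 then n - 1 else n + 1
def epsD (n : ℕ) : ℝ := if n = 0 then 1 else 0
def epsE (n : ℕ) : ℝ := if n = 0 then 0 else 1

lemma hepsJ : ∀ n, |epsJ n| ≤ 1 := by intro n; unfold epsJ; split_ifs <;> norm_num
lemma hepsK : ∀ n, |epsK n| ≤ 1 := by intro n; unfold epsK; split_ifs <;> norm_num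
lemma hepsD : ∀ n, |epsD n| ≤ 1 := by intro n; unfold epsD; split_ifs <;> norm_num
lemma hepsE : ∀ n, |epsE n| ≤ 1 := by intro n; unfold epsE; split_ifs <;> norm_num

lemma sigJ_inj : Function.Injective sigJ := by
  have h : Function.Involutive sigJ := by intro n; unfold sigJ; split_ifs <;> omega
  exact h.injective

lemma sigK_inj : Function.Injective sigK := by
  intro a b hab
  unfold sigK at hab
  split_ifs at hab <;> omega

def Jop : X → X := Top epsJ sigJ hepsJ sigJ_inj
def Kop : X → X := Top epsK sigK hepsK sigK_inj
def Dop : X → X := Top epsD id hepsD Function.injective_id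
def Eop : X → X := Top epsE id hepsE Function.injective_id

lemma Jop_even (x : X) (k : ℕ) : (Jop x : ∀ _ : ℕ, ℝ) (2*k) = -(x (2*k+1)) := by
  rw [Jop, Top_apply]
  rw [show epsJ (2*k) = -1 from by unfold epsJ; rw [if_pos (by omega)]]
  rw [show sigJ (2*k) = 2*k+1 from by unfold sigJ; rw [if_pos (by omega)]]
  ring

lemma Jop_odd (x : X) (k : ℕ) : (Jop x : ∀ _ : ℕ, ℝ) (2*k+1) = x (2*k) := by
  rw [Jop, Top_apply]
  rw [show epsJ (2*k+1) = 1 from by unfold epsJ; rw [if_neg (by omega)]]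
  rw [show sigJ (2*k+1) = 2*k from by unfold sigJ; rw [if_neg (by omega)]; omega]
  ring

lemma Kop_zero (x : X) : (Kop x : ∀ _ : ℕ, ℝ) 0 = 0 := by
  rw [Kop, Top_apply]
  rw [show epsK 0 = 0 from by unfold epsK; rw [if_pos rfl]]
  ring

lemma Kop_odd (x : X) (k : ℕ) : (Kop x : ∀ _ : ℕ, ℝ) (2*k+1) = -(x (2*k+2)) := by
  rw [Kop, Top_apply]
  rw [show epsK (2*k+1) = -1 from by unfold epsK; rw [if_neg (by omega), if_neg (by omega)]]
  rw [show sigK (2*k+1) = 2*k+2 from by unfold sigK; rw [if_neg (by omega), if_neg (by omega)]]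
  ring

lemma Kop_even (x : X) (k : ℕ) : (Kop x : ∀ _ : ℕ, ℝ) (2*k+2) = x (2*k+1) := by
  rw [Kop, Top_apply]
  rw [show epsK (2*k+2) = 1 from by unfold epsK; rw [if_neg (by omega), if_pos (by omega)]]
  rw [show sigK (2*k+2) = 2*k+1 from by unfold sigK; rw [if_neg (by omega), if_pos (by omega)]; omega]
  ring

lemma Dop_zero (x : X) : (Dop x : ∀ _ : ℕ, ℝ) 0 = x 0 := by
  rw [Dop, Top_apply]
  rw [show epsD 0 = 1 from by unfold epsD; rw [if_pos rfl]]
  simp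

lemma Dop_ne (x : X) {n : ℕ} (h : n ≠ 0) : (Dop x : ∀ _ : ℕ, ℝ) n = 0 := by
  rw [Dop, Top_apply]
  rw [show epsD n = 0 from by unfold epsD; rw [if_neg h]]
  ring

lemma Eop_zero (x : X) : (Eop x : ∀ _ : ℕ, ℝ) 0 = 0 := by
  rw [Eop, Top_apply]
  rw [show epsE 0 = 0 from by unfold epsE; rw [if_pos rfl]]
  ring

lemma Eop_ne (x : X) {n : ℕ} (h : n ≠ 0) : (Eop x : ∀ _ : ℕ, ℝ) n = x n := by
  rw [Eop, Top_apply]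
  rw [show epsE n = 1 from by unfold epsE; rw [if_neg h]]
  simp

lemma Dop_add_Eop (x : X) : Dop x + Eop x = x := by
  apply lp.ext; funext n
  rw [lp.coeFn_add, Pi.add_apply]
  rcases eq_or_ne n 0 with h | h
  · subst h; rw [Dop_zero, Eop_zero]; ring
  · rw [Dop_ne x h, Eop_ne x h]; ring

/-! ### The two rotation layers -/

def PL (c s : ℝ) (x : X) : X := c • x + s • Jop x
def QL (c s : ℝ) (x : X) : X := Dop x + c • Eop x + s • Kop x

lemma PL_apply (c s : ℝ) (x : X) (n : ℕ) :
    (PL c s x : ∀ _ : ℕ, ℝ) n = c * x n + s * (Jop x : ∀ _ : ℕ, ℝ) n := by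
  rw [PL, lp.coeFn_add, Pi.add_apply, lp.coeFn_smul, lp.coeFn_smul, Pi.smul_apply,
    Pi.smul_apply, smul_eq_mul, smul_eq_mul]

lemma QL_apply (c s : ℝ) (x : X) (n : ℕ) :
    (QL c s x : ∀ _ : ℕ, ℝ) n
      = (Dop x : ∀ _ : ℕ, ℝ) n + c * (Eop x : ∀ _ : ℕ, ℝ) n
        + s * (Kop x : ∀ _ : ℕ, ℝ) n := by
  rw [QL, lp.coeFn_add, Pi.add_apply, lp.coeFn_add, Pi.add_apply, lp.coeFn_smul,
    lp.coeFn_smul, Pi.smul_apply, Pi.smul_apply, smul_eq_mul, smul_eq_mul]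

lemma PL_even (c s : ℝ) (x : X) (k : ℕ) :
    (PL c s x : ∀ _ : ℕ, ℝ) (2*k) = c * x (2*k) - s * x (2*k+1) := by
  rw [PL_apply, Jop_even]; ring

lemma PL_odd (c s : ℝ) (x : X) (k : ℕ) :
    (PL c s x : ∀ _ : ℕ, ℝ) (2*k+1) = c * x (2*k+1) + s * x (2*k) := by
  rw [PL_apply, Jop_odd]

lemma QL_zero (c s : ℝ) (x : X) : (QL c s x : ∀ _ : ℕ, ℝ) 0 = x 0 := by
  rw [QL_apply, Dop_zero, Eop_zero, Kop_zero]; ring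

lemma QL_odd (c s : ℝ) (x : X) (k : ℕ) :
    (QL c s x : ∀ _ : ℕ, ℝ) (2*k+1) = c * x (2*k+1) - s * x (2*k+2) := by
  rw [QL_apply, Dop_ne x (by omega), Eop_ne x (by omega), Kop_odd]; ring

lemma QL_even (c s : ℝ) (x : X) (k : ℕ) :
    (QL c s x : ∀ _ : ℕ, ℝ) (2*k+2) = c * x (2*k+2) + s * x (2*k+1) := by
  rw [QL_apply, Dop_ne x (by omega), Eop_ne x (by omega), Kop_even]; ring

/-! ### Norm preservation -/

lemma block_norm {c s : ℝ} (h : c^2 + s^2 = 1) (a b : ℝ) :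
    ‖c*a - s*b‖ ^ (2:ℕ) + ‖c*b + s*a‖ ^ (2:ℕ) = ‖a‖ ^ (2:ℕ) + ‖b‖ ^ (2:ℕ) := by
  simp only [Real.norm_eq_abs, sq_abs]
  linear_combination (a^2 + b^2) * h

lemma PL_norm {c s : ℝ} (h : c^2 + s^2 = 1) (x : X) : ‖PL c s x‖ = ‖x‖ := by
  apply norm_eq_of_sq
  apply pair_tsum (summable_sq _) (summable_sq _)
  intro k
  rw [PL_even, PL_odd]
  exact block_norm h _ _

lemma QL_norm {c s : ℝ} (h : c^2 + s^2 = 1) (x : X) : ‖QL c s x‖ = ‖x‖ := by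
  apply norm_eq_of_sq
  apply zero_pair_tsum (summable_sq _) (summable_sq _)
  · rw [QL_zero]
  · intro k
    rw [QL_odd, QL_even]
    exact block_norm h _ _

/-! ### Inverses -/

lemma PL_PL {c s : ℝ} (h : c^2 + s^2 = 1) (x : X) : PL c (-s) (PL c s x) = x := by
  apply lp.ext; funext n
  rcases Nat.even_or_odd n with ⟨k, hk⟩ | ⟨k, hk⟩
  · have hn : n = 2*k := by omega
    subst hn
    rw [PL_even, PL_even, PL_odd]
    linear_combination (x (2*k) : ℝ) * h
  · have hn : n = 2*k+1 := by omega
    subst hn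
    rw [PL_odd, PL_odd, PL_even]
    linear_combination (x (2*k+1) : ℝ) * h

lemma QL_QL {c s : ℝ} (h : c^2 + s^2 = 1) (x : X) : QL c (-s) (QL c s x) = x := by
  apply lp.ext; funext n
  rcases n with _ | m
  · rw [QL_zero, QL_zero]
  · rcases Nat.even_or_odd m with ⟨k, hk⟩ | ⟨k, hk⟩
    · have hn : m + 1 = 2*k+1 := by omega
      rw [hn, QL_odd, QL_odd, QL_even]
      linear_combination (x (2*k+1) : ℝ) * h
    · have hn : m + 1 = 2*k+2 := by omega
      rw [hn, QL_even, QL_even, QL_odd]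
      linear_combination (x (2*k+2) : ℝ) * h

/-! ### Linearity -/

lemma PL_add (c s : ℝ) (x y : X) : PL c s (x + y) = PL c s x + PL c s y := by
  unfold PL Jop
  rw [Top_add, smul_add, smul_add]
  abel

lemma PL_smul (c s r : ℝ) (x : X) : PL c s (r • x) = r • PL c s x := by
  unfold PL Jop
  rw [Top_smul, smul_add, smul_comm c r, smul_comm s r]

lemma QL_add (c s : ℝ) (x y : X) : QL c s (x + y) = QL c s x + QL c s y := by
  unfold QL Dop Eop Kop
  rw [Top_add, Top_add, Top_add, smul_add, smul_add]
  abel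

lemma QL_smul (c s r : ℝ) (x : X) : QL c s (r • x) = r • QL c s x := by
  unfold QL Dop Eop Kop
  rw [Top_smul, Top_smul, Top_smul, smul_add, smul_add, smul_comm c r, smul_comm s r]

/-! ### The isotopy -/

def Hmap (t : ℝ) (x : X) : X :=
  PL (Real.cos (t * Real.pi)) (Real.sin (t * Real.pi))
    (QL (Real.cos (t * Real.pi)) (-Real.sin (t * Real.pi)) x)

lemma Hmap_continuous : Continuous fun p : ℝ × X => Hmap p.1 p.2 := by
  have hJ : Continuous Jop := Top_continuous
  have hK : Continuous Kop := Top_continuous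
  have hD : Continuous Dop := Top_continuous
  have hE : Continuous Eop := Top_continuous
  have hcos : Continuous fun p : ℝ × X => Real.cos (p.1 * Real.pi) :=
    Real.continuous_cos.comp (continuous_fst.mul continuous_const)
  have hsin : Continuous fun p : ℝ × X => Real.sin (p.1 * Real.pi) :=
    Real.continuous_sin.comp (continuous_fst.mul continuous_const)
  have hg : Continuous fun p : ℝ × X =>
      QL (Real.cos (p.1 * Real.pi)) (-Real.sin (p.1 * Real.pi)) p.2 := by
    unfold QL
    exact ((hD.comp continuous_snd).add (hcos.smul (hE.comp continuous_snd))).add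
      ((hsin.neg).smul (hK.comp continuous_snd))
  unfold Hmap PL
  exact (hcos.smul hg).add (hsin.smul (hJ.comp hg))

lemma Hmap_zero (x : X) : Hmap 0 x = x := by
  unfold Hmap
  rw [zero_mul, Real.cos_zero, Real.sin_zero, neg_zero]
  have hQ : QL 1 0 x = x := by
    unfold QL; rw [one_smul, zero_smul, add_zero, Dop_add_Eop]
  rw [hQ]
  unfold PL; rw [one_smul, zero_smul, add_zero]

lemma Hmap_add (t : ℝ) (x y : X) : Hmap t (x + y) = Hmap t x + Hmap t y := by
  unfold Hmap; rw [QL_add, PL_add]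

lemma Hmap_smul (t r : ℝ) (x : X) : Hmap t (r • x) = r • Hmap t x := by
  unfold Hmap; rw [QL_smul, PL_smul]

lemma Hmap_norm (t : ℝ) (x : X) : ‖Hmap t x‖ = ‖x‖ := by
  have h1 : (Real.cos (t*Real.pi))^2 + (Real.sin (t*Real.pi))^2 = 1 :=
    Real.cos_sq_add_sin_sq _
  have h2 : (Real.cos (t*Real.pi))^2 + (-Real.sin (t*Real.pi))^2 = 1 := by
    rw [neg_sq]; exact h1
  unfold Hmap; rw [PL_norm h1, QL_norm h2]

lemma Hmap_surj (t : ℝ) : Function.Surjective (Hmap t) := by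
  intro y
  have h1 : (Real.cos (t*Real.pi))^2 + (Real.sin (t*Real.pi))^2 = 1 :=
    Real.cos_sq_add_sin_sq _
  have h2 : (Real.cos (t*Real.pi))^2 + (-Real.sin (t*Real.pi))^2 = 1 := by
    rw [neg_sq]; exact h1
  refine ⟨QL (Real.cos (t*Real.pi)) (Real.sin (t*Real.pi))
    (PL (Real.cos (t*Real.pi)) (-Real.sin (t*Real.pi)) y), ?_⟩
  unfold Hmap
  rw [QL_QL h1]
  have h3 := PL_PL h2 y
  rwa [neg_neg] at h3

lemma Hmap_one (x : X) :
    Hmap 1 x = x - (2 * ((x : ∀ _ : ℕ, ℝ) 0)) • lp.single 2 0 (1:ℝ) := by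
  unfold Hmap
  rw [one_mul, Real.cos_pi, Real.sin_pi, neg_zero]
  have hQ : QL (-1) 0 x = Dop x - Eop x := by
    unfold QL; rw [zero_smul, add_zero, neg_one_smul, ← sub_eq_add_neg]
  have hP : PL (-1) 0 (Dop x - Eop x) = -(Dop x - Eop x) := by
    unfold PL; rw [zero_smul, add_zero, neg_one_smul]
  rw [hQ, hP]
  apply lp.ext; funext n
  rw [lp.coeFn_neg, Pi.neg_apply, lp.coeFn_sub, Pi.sub_apply, lp.coeFn_sub, Pi.sub_apply,
    lp.coeFn_smul, Pi.smul_apply]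
  rcases eq_or_ne n 0 with hn | hn
  · subst hn
    rw [Dop_zero, Eop_zero, lp.single_apply_self]
    rw [smul_eq_mul]; ring
  · rw [Dop_ne x hn, Eop_ne x hn, lp.single_apply_ne _ _ _ hn]
    rw [smul_eq_mul]; ring

end

end Ell2Refl

/-- **In `ℓ²(ℕ;ℝ)` the identity and a reflection are isotopic through surjective linear
isometries.** There is a jointly continuous map `H : [0,1] × ℓ² → ℓ²` such that each `H(t,·)` is a
surjective linear isometry, `H(0,·) = Id` and `H(1,·)` is the reflection
`x ↦ x − 2⟨x,e₀⟩e₀` across the hyperplane `{e₀}ᗮ`. -/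
theorem ell2_isotopy_of_linear_isometries_from_id_to_reflection :
    ∃ H : ℝ → lp (fun _ : ℕ => ℝ) 2 → lp (fun _ : ℕ => ℝ) 2,
      -- joint continuity on `[0,1] × X` (norm topology)
      ContinuousOn (fun p : ℝ × lp (fun _ : ℕ => ℝ) 2 => H p.1 p.2)
        (Set.Icc (0:ℝ) 1 ×ˢ Set.univ) ∧
      -- each `H t` is a surjective linear isometry
      (∀ t ∈ Set.Icc (0:ℝ) 1,
        (∀ x y, H t (x + y) = H t x + H t y) ∧
        (∀ (c : ℝ) (x), H t (c • x) = c • H t x) ∧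
        (∀ x, ‖H t x‖ = ‖x‖) ∧
        Function.Surjective (H t)) ∧
      -- endpoints: the identity and the reflection across `{e₀}ᗮ`
      (∀ x, H 0 x = x) ∧
      (∀ x, H 1 x = x - (2 * ⟪x, lp.single 2 0 (1:ℝ)⟫) • lp.single 2 0 (1:ℝ)) := by
  refine ⟨Ell2Refl.Hmap, Ell2Refl.Hmap_continuous.continuousOn, fun t _ =>
    ⟨Ell2Refl.Hmap_add t, Ell2Refl.Hmap_smul t, Ell2Refl.Hmap_norm t,
      Ell2Refl.Hmap_surj t⟩, Ell2Refl.Hmap_zero, fun x => ?_⟩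
  have hin : ⟪x, lp.single 2 0 (1:ℝ)⟫ = (x : ∀ _ : ℕ, ℝ) 0 := by
    rw [lp.inner_single_right]
    simp [RCLike.inner_apply]
  rw [hin]
  exact Ell2Refl.Hmap_one x
end

section
/- Let n ≥ 1 and let ψ₁, …, ψ_n ∈ L²((0,1); ℝ) be linearly independent. For s ∈ [0,1] define the symmetric matrix a(s) ∈ ℝ^{n×n} by a_{jk}(s) = ∫₀¹ sign(t − s) ψ_j(t) ψ_k(t) dt. Then a(0) is positive definite, a(1) is negative definite, the map s ↦ a(s) is continuous, and there exists s ∈ (0,1) and a nonzero vector v ∈ ℝⁿ with a(s) v = 0; that is, the Galerkin discretization matrix of the multiplication operator u ↦ sign(· − s) u is singular for some s, even though all these multiplication operators are invertible on L²((0,1);ℝ). -/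
open MeasureTheory Matrix

/-- The Lebesgue measure on the interval `(0,1)`. -/
noncomputable def mu01 : Measure ℝ := volume.restrict (Set.Ioo 0 1)

lemma measurable_realSign : Measurable Real.sign := by
  have h : Real.sign = fun r : ℝ => if r < 0 then (-1 : ℝ) else if 0 < r then 1 else 0 :=
    funext fun r => rfl
  rw [h]
  exact Measurable.ite measurableSet_Iio measurable_const
    (Measurable.ite measurableSet_Ioi measurable_const measurable_const)

/-- Continuity of `s ↦ ∫ sign (t - s) f t` for integrable `f`. -/
lemma continuous_sign_integral {f : ℝ → ℝ} (hf : Integrable f mu01)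
    (hfm : AEStronglyMeasurable f mu01) :
    Continuous fun s : ℝ => ∫ t, Real.sign (t - s) * f t ∂mu01 := by
  rw [continuous_iff_continuousAt]
  intro s
  have hsing : mu01 {s} = 0 := by
    refine le_antisymm (le_trans (Measure.restrict_le_self _) ?_) bot_le
    simp
  have hae : ∀ᵐ t ∂mu01, t ≠ s := by
    rw [ae_iff]
    simpa using hsing
  refine tendsto_integral_filter_of_dominated_convergence (fun t => |f t|) ?_ ?_ ?_ ?_
  · filter_upwards with s'
    exact (((measurable_realSign.comp
      (measurable_id.sub measurable_const)).aestronglyMeasurable)).mul hfm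
  · filter_upwards with s'
    filter_upwards with t
    have h1 : |Real.sign (t - s')| ≤ 1 := by
      rcases Real.sign_apply_eq (t - s') with h | h | h <;> rw [h] <;> norm_num
    calc ‖Real.sign (t - s') * f t‖ = |Real.sign (t - s')| * |f t| := abs_mul _ _
      _ ≤ 1 * |f t| := mul_le_mul_of_nonneg_right h1 (abs_nonneg _)
      _ = |f t| := one_mul _
  · exact hf.abs
  · filter_upwards [hae] with t ht
    rcases Ne.lt_or_gt ht with h | h
    · -- t < s, eventually s' > t, sign (t - s') = -1
      have hev : ∀ᶠ s' in nhds s, Real.sign (t - s) * f t = Real.sign (t - s') * f t := by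
        filter_upwards [Ioi_mem_nhds h] with s' hs'
        rw [Real.sign_of_neg (by linarith), Real.sign_of_neg (by simpa using hs')]
      exact Filter.Tendsto.congr' hev tendsto_const_nhds
    · have hev : ∀ᶠ s' in nhds s, Real.sign (t - s) * f t = Real.sign (t - s') * f t := by
        filter_upwards [Iio_mem_nhds h] with s' hs'
        rw [Real.sign_of_pos (by linarith), Real.sign_of_pos (by simpa [sub_pos] using hs')]
      exact Filter.Tendsto.congr' hev tendsto_const_nhds

/-- A bound on quadratic forms of vectors in the (sup-norm) unit sphere. -/
lemma quad_bound {n : ℕ} (M : Matrix (Fin n) (Fin n) ℝ) (v : Fin n → ℝ) (hv : ‖v‖ ≤ 1) :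
    |v ⬝ᵥ M.mulVec v| ≤ ∑ j, ∑ k, |M j k| := by
  have hvi : ∀ i, |v i| ≤ 1 := fun i => le_trans (norm_le_pi_norm v i) hv
  have h1 : v ⬝ᵥ M.mulVec v = ∑ j, ∑ k, v j * (M j k * v k) := by
    simp [dotProduct, mulVec, Finset.mul_sum]
  rw [h1]
  calc |∑ j, ∑ k, v j * (M j k * v k)| ≤ ∑ j, |∑ k, v j * (M j k * v k)| :=
        Finset.abs_sum_le_sum_abs _ _
    _ ≤ ∑ j, ∑ k, |v j * (M j k * v k)| :=
        Finset.sum_le_sum fun j _ => Finset.abs_sum_le_sum_abs _ _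
    _ ≤ ∑ j, ∑ k, |M j k| := by
        refine Finset.sum_le_sum fun j _ => Finset.sum_le_sum fun k _ => ?_
        rw [abs_mul, abs_mul]
        calc |v j| * (|M j k| * |v k|) ≤ 1 * (|M j k| * 1) := by
              exact mul_le_mul (hvi j)
                (mul_le_mul_of_nonneg_left (hvi k) (abs_nonneg _)) (by positivity) zero_le_one
          _ = |M j k| := by ring

/-- Continuous path of symmetric matrices from positive definite to negative definite must
pass through a singular matrix. -/
lemma exists_singular_on_path {n : ℕ} (hn : 1 ≤ n) (A : ℝ → Matrix (Fin n) (Fin n) ℝ)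
    (hA : Continuous A) (hsym : ∀ s, (A s).IsHermitian)
    (h0 : ∀ v : Fin n → ℝ, v ≠ 0 → 0 < v ⬝ᵥ (A 0).mulVec v)
    (h1 : ∀ v : Fin n → ℝ, v ≠ 0 → v ⬝ᵥ (A 1).mulVec v < 0) :
    ∃ s ∈ Set.Ioo (0:ℝ) 1, ∃ v : Fin n → ℝ, v ≠ 0 ∧ (A s).mulVec v = 0 := by
  haveI : Nonempty (Fin n) := ⟨⟨0, hn⟩⟩
  set S : Set (Fin n → ℝ) := Metric.sphere 0 1 with hS_def
  have hS : IsCompact S := isCompact_sphere 0 1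
  have hSne : S.Nonempty := ⟨fun _ => 1, by simp [hS_def, mem_sphere_zero_iff_norm]⟩
  have hSnorm : ∀ v ∈ S, ‖v‖ = 1 := fun v hv => mem_sphere_zero_iff_norm.mp hv
  have hSne0 : ∀ v ∈ S, v ≠ 0 := by
    intro v hv h
    have := hSnorm v hv
    rw [h] at this
    simp at this
  have hQc : ∀ M : Matrix (Fin n) (Fin n) ℝ, Continuous fun v : Fin n → ℝ => v ⬝ᵥ M.mulVec v := by
    intro M
    have h : (fun v : Fin n → ℝ => v ⬝ᵥ M.mulVec v)
        = fun v => ∑ j, ∑ k, v j * (M j k * v k) := by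
      funext v; simp [dotProduct, mulVec, Finset.mul_sum]
    rw [h]
    exact continuous_finset_sum _ fun j _ => continuous_finset_sum _ fun k _ =>
      (continuous_apply j).mul (continuous_const.mul (continuous_apply k))
  set g : ℝ → ℝ := fun s => sInf ((fun v => v ⬝ᵥ (A s).mulVec v) '' S) with hg_def
  have hmin : ∀ s : ℝ, ∃ v ∈ S, v ⬝ᵥ (A s).mulVec v = g s ∧
      ∀ w ∈ S, v ⬝ᵥ (A s).mulVec v ≤ w ⬝ᵥ (A s).mulVec w := by
    intro s
    obtain ⟨v, hvS, hvmin'⟩ := hS.exists_isMinOn hSne (hQc (A s)).continuousOn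
    have hvmin := isMinOn_iff.mp hvmin'
    refine ⟨v, hvS, ?_, hvmin⟩
    have hleast : IsLeast ((fun v => v ⬝ᵥ (A s).mulVec v) '' S) (v ⬝ᵥ (A s).mulVec v) := by
      constructor
      · exact ⟨v, hvS, rfl⟩
      · rintro y ⟨w, hwS, rfl⟩
        exact hvmin w hwS
    exact hleast.csInf_eq.symm
  -- continuity of g
  have hkey : ∀ s s' : ℝ, g s' - g s ≤ ∑ j, ∑ k, |A s' j k - A s j k| := by
    intro s s'
    obtain ⟨v, hvS, hgv, _⟩ := hmin s
    obtain ⟨v', hv'S, hgv', hmin'⟩ := hmin s'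
    have h2 : g s' ≤ v ⬝ᵥ (A s').mulVec v := hgv' ▸ hmin' v hvS
    have h3 : v ⬝ᵥ (A s').mulVec v - v ⬝ᵥ (A s).mulVec v ≤ ∑ j, ∑ k, |A s' j k - A s j k| := by
      have h4 : v ⬝ᵥ (A s').mulVec v - v ⬝ᵥ (A s).mulVec v = v ⬝ᵥ (A s' - A s).mulVec v := by
        rw [Matrix.sub_mulVec, dotProduct_sub]
      rw [h4]
      refine le_trans (le_abs_self _) ?_
      simpa using quad_bound (A s' - A s) v (le_of_eq (hSnorm v hvS))
    linarith
  have hentry : ∀ j k : Fin n, Continuous fun s => A s j k := by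
    intro j k
    exact (continuous_apply k).comp ((continuous_apply j).comp hA)
  have hgcont : Continuous g := by
    rw [continuous_iff_continuousAt]
    intro s
    have hh : Continuous fun s' => ∑ j, ∑ k, |A s' j k - A s j k| := by
      exact continuous_finset_sum _ fun j _ => continuous_finset_sum _ fun k _ =>
        ((hentry j k).sub continuous_const).abs
    have hh0 : Filter.Tendsto (fun s' => ∑ j, ∑ k, |A s' j k - A s j k|) (nhds s) (nhds 0) := by
      have := hh.tendsto s
      simpa using this
    have habs : ∀ s', dist (g s') (g s) ≤ ∑ j, ∑ k, |A s' j k - A s j k| := by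
      intro s'
      rw [Real.dist_eq, abs_sub_le_iff]
      constructor
      · refine le_trans (hkey s s') (le_of_eq ?_)
        rfl
      · refine le_trans (hkey s' s) (le_of_eq ?_)
        exact Finset.sum_congr rfl fun j _ => Finset.sum_congr rfl fun k _ => abs_sub_comm _ _
    exact tendsto_iff_dist_tendsto_zero.mpr
      (squeeze_zero (fun _ => dist_nonneg) habs hh0)
  -- sign at endpoints
  have hg0 : 0 < g 0 := by
    obtain ⟨v, hvS, hgv, _⟩ := hmin 0
    rw [← hgv]
    exact h0 v (hSne0 v hvS)
  have hg1 : g 1 < 0 := by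
    obtain ⟨v, hvS, hgv, _⟩ := hmin 1
    rw [← hgv]
    exact h1 v (hSne0 v hvS)
  -- IVT
  have hivt := intermediate_value_Ioo' (by norm_num : (0:ℝ) ≤ 1) hgcont.continuousOn
  obtain ⟨s, hs, hgs⟩ := hivt ⟨hg1, hg0⟩
  refine ⟨s, hs, ?_⟩
  obtain ⟨v, hvS, hgv, hvmin⟩ := hmin s
  have hQv : v ⬝ᵥ (A s).mulVec v = 0 := by rw [hgv, hgs]
  -- A s is positive semidefinite
  have hpsd : ∀ x : Fin n → ℝ, 0 ≤ x ⬝ᵥ (A s).mulVec x := by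
    intro x
    by_cases hx : x = 0
    · simp [hx]
    · have hxn : ‖x‖ ≠ 0 := by simpa using hx
      set w : Fin n → ℝ := ‖x‖⁻¹ • x with hw_def
      have hwS : w ∈ S := by
        rw [hS_def, mem_sphere_zero_iff_norm, hw_def, norm_smul]
        simp [hxn]
      have hwpos : 0 ≤ w ⬝ᵥ (A s).mulVec w := by
        have := hvmin w hwS
        rw [hQv] at this
        exact this
      have hxw : x ⬝ᵥ (A s).mulVec x = ‖x‖ * (‖x‖ * (w ⬝ᵥ (A s).mulVec w)) := by
        rw [hw_def, Matrix.mulVec_smul, dotProduct_smul, smul_dotProduct]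
        have hxne : (‖x‖ : ℝ) ≠ 0 := hxn
        field_simp
        simp only [smul_eq_mul, one_div]
        rw [← mul_assoc, sq, mul_assoc ‖x‖ ‖x‖, mul_inv_cancel₀ hxne, mul_one, ← mul_assoc, mul_inv_cancel₀ hxne, one_mul]
      rw [hxw]
      positivity
  have hPSD : (A s).PosSemidef := by
    refine .of_dotProduct_mulVec_nonneg (hsym s) fun x => ?_
    have hstar : star x = x := by
      funext i; exact star_trivial _
    rw [hstar]
    exact hpsd x
  have hzero : (A s).mulVec v = 0 := by
    have := (hPSD.dotProduct_mulVec_zero_iff v).mp ?_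
    · exact this
    · have hstar : star v = v := by funext i; exact star_trivial _
      rw [hstar]
      exact hQv
  exact ⟨v, hSne0 v hvS, hzero⟩

/-- **Galerkin discretizations of the sign multiplication operators become singular.**
Let `ψ₁, …, ψ_n ∈ L²((0,1);ℝ)` be linearly independent and, for `s ∈ [0,1]`, let
`a(s)_{jk} = ∫₀¹ sign(t − s) ψ_j(t) ψ_k(t) dt`.  Then `a(0)` is positive definite, `a(1)` is
negative definite, `s ↦ a(s)` is continuous on `[0,1]`, and there is some `s ∈ (0,1)` for which
`a(s)` has nontrivial kernel, i.e. the Galerkin matrix is singular — even though every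
multiplication operator `u ↦ sign(· − s)·u` is invertible on `L²((0,1);ℝ)`. -/
theorem galerkin_matrix_of_sign_operator_is_singular_somewhere
    {n : ℕ} (hn : 1 ≤ n) (ψ : Fin n → Lp ℝ 2 mu01)
    (hψ : LinearIndependent ℝ ψ)
    (a : ℝ → Matrix (Fin n) (Fin n) ℝ)
    (ha : ∀ (s : ℝ) (j k : Fin n),
      a s j k = ∫ t, Real.sign (t - s) * (ψ j t * ψ k t) ∂mu01) :
    -- `a(0)` is positive definite
    (∀ v : Fin n → ℝ, v ≠ 0 → 0 < v ⬝ᵥ (a 0).mulVec v) ∧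
    -- `a(1)` is negative definite
    (∀ v : Fin n → ℝ, v ≠ 0 → v ⬝ᵥ (a 1).mulVec v < 0) ∧
    -- `s ↦ a(s)` is continuous on `[0,1]`
    ContinuousOn a (Set.Icc (0:ℝ) 1) ∧
    -- the Galerkin matrix is singular for some `s ∈ (0,1)`
    (∃ s ∈ Set.Ioo (0:ℝ) 1, ∃ v : Fin n → ℝ, v ≠ 0 ∧ (a s).mulVec v = 0) := by
  have hmem : ∀ᵐ t ∂mu01, t ∈ Set.Ioo (0:ℝ) 1 := by
    unfold mu01
    exact ae_restrict_mem measurableSet_Ioo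
  -- the entries of a 0 are the Gram matrix entries
  have h0 : ∀ j k, a 0 j k = (inner ℝ (ψ j) (ψ k) : ℝ) := by
    intro j k
    rw [ha, L2.inner_def]
    refine integral_congr_ae ?_
    filter_upwards [hmem] with t ht
    rw [sub_zero, Real.sign_of_pos ht.1, one_mul]
    simp [RCLike.inner_apply, mul_comm]
  have h1 : ∀ j k, a 1 j k = -(a 0 j k) := by
    intro j k
    rw [ha, ha, ← integral_neg]
    refine integral_congr_ae ?_
    filter_upwards [hmem] with t ht
    rw [Real.sign_of_neg (by linarith [ht.2]), sub_zero, Real.sign_of_pos ht.1]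
    ring
  -- nonvanishing of combinations
  have husum : ∀ v : Fin n → ℝ, v ≠ 0 → (∑ j, v j • ψ j) ≠ 0 := by
    intro v hv h
    apply hv
    funext i
    exact Fintype.linearIndependent_iff.mp hψ v h i
  have hquad : ∀ v : Fin n → ℝ,
      v ⬝ᵥ (a 0).mulVec v = (inner ℝ (∑ j, v j • ψ j) (∑ k, v k • ψ k) : ℝ) := by
    intro v
    rw [sum_inner]
    simp only [inner_sum, real_inner_smul_left, real_inner_smul_right]
    simp only [dotProduct, mulVec, h0, Finset.mul_sum]
    refine Finset.sum_congr rfl fun j _ => Finset.sum_congr rfl fun k _ => ?_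
    ring
  have hpos : ∀ v : Fin n → ℝ, v ≠ 0 → 0 < v ⬝ᵥ (a 0).mulVec v := by
    intro v hv
    rw [hquad, real_inner_self_eq_norm_mul_norm]
    have hpos' : 0 < ‖∑ j, v j • ψ j‖ := norm_pos_iff.mpr (husum v hv)
    exact mul_pos hpos' hpos'
  have ha1eq : a 1 = -(a 0) := by
    ext j k
    simpa using h1 j k
  have hneg : ∀ v : Fin n → ℝ, v ≠ 0 → v ⬝ᵥ (a 1).mulVec v < 0 := by
    intro v hv
    rw [ha1eq, Matrix.neg_mulVec, dotProduct_neg]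
    simpa using hpos v hv
  -- continuity
  have hint : ∀ j k : Fin n, Integrable (fun t => ψ j t * ψ k t) mu01 := by
    intro j k
    have := L2.integrable_inner (𝕜 := ℝ) (ψ j) (ψ k)
    simpa [RCLike.inner_apply, mul_comm] using this
  have hacont : Continuous a := by
    refine continuous_matrix fun j k => ?_
    have h : (fun s => a s j k)
        = fun s => ∫ t, Real.sign (t - s) * (ψ j t * ψ k t) ∂mu01 :=
      funext fun s => ha s j k
    rw [h]
    exact continuous_sign_integral (hint j k) (hint j k).1
  -- symmetry
  have hsym : ∀ s, (a s).IsHermitian := by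
    intro s
    refine Matrix.IsHermitian.ext fun j k => ?_
    rw [star_trivial, ha, ha]
    congr 1
    funext t
    ring
  refine ⟨hpos, hneg, hacont.continuousOn, ?_⟩
  exact exists_singular_on_path hn a hacont hsym hpos hneg
end

section
/- Let D ⊂ ℝ^d be a bounded measurable set with positive measure. Let σ : ℝ → ℝ be locally Lipschitz and suppose there are constants C₁, C₂ ≥ 0 and α > 0 with |σ(s)| ≤ C₁|s| + C₂ for all s ∈ ℝ and σ'(s) ≥ α for almost every s ∈ ℝ (the derivative exists a.e. by local Lipschitzness). Then the Nemytskii operator F^σ : L²(D;ℝ) → L²(D;ℝ) defined by F^σ(u) = σ ∘ u is well-defined (maps L²(D;ℝ) into itself) and strongly monotone with constant α: ⟨F^σ(u) − F^σ(v), u − v⟩_{L²} ≥ α‖u − v‖²_{L²} for all u, v ∈ L²(D;ℝ). -/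
open MeasureTheory Set Filter Metric
open scoped RealInnerProductSpace

lemma core_stieltjes {k : ℝ → ℝ} (hk : Monotone k) (hcont : Continuous k)
    {c d β : ℝ} (hcd : c ≤ d) (hβ : 0 ≤ β)
    (hd : ∀ᵐ x, x ∈ Ioo c d → ENNReal.ofReal β ≤ hk.stieltjesFunction.measure.rnDeriv volume x) :
    β * (d - c) ≤ k d - k c := by
  set μ := hk.stieltjesFunction.measure with hμ
  have hs : ∀ x, hk.stieltjesFunction x = k x := by
    intro x
    rw [hk.stieltjesFunction_eq]
    exact rightLim_eq_of_tendsto (h := nhdsGT_neBot x)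
      (hcont.continuousAt.tendsto.mono_left nhdsWithin_le_nhds)
  have h1 : ENNReal.ofReal (β * (d - c)) = ∫⁻ _ in Ioc c d, ENNReal.ofReal β ∂volume := by
    rw [MeasureTheory.setLIntegral_const, Real.volume_Ioc, ← ENNReal.ofReal_mul hβ]
  have h2 : (∫⁻ x in Ioc c d, ENNReal.ofReal β ∂volume)
      ≤ ∫⁻ x in Ioc c d, μ.rnDeriv volume x ∂volume := by
    refine lintegral_mono_ae ?_
    have hnd : ∀ᵐ x : ℝ ∂volume, x ≠ d := by
      refine ae_iff.2 ?_
      simpa using Real.volume_singleton (a := d)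
    have hres : ∀ᵐ x ∂(volume.restrict (Ioc c d)), (x ∈ Ioo c d → ENNReal.ofReal β ≤ μ.rnDeriv volume x) ∧ x ≠ d := ae_restrict_of_ae (hd.and hnd)
    filter_upwards [hres, ae_restrict_mem measurableSet_Ioc] with x hx hxm
    exact hx.1 ⟨hxm.1, lt_of_le_of_ne hxm.2 hx.2⟩
  have h3 : (∫⁻ x in Ioc c d, μ.rnDeriv volume x ∂volume) ≤ μ (Ioc c d) := by
    rw [← withDensity_apply _ measurableSet_Ioc]
    exact Measure.withDensity_rnDeriv_le μ volume _
  have h4 : μ (Ioc c d) = ENNReal.ofReal (k d - k c) := by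
    rw [hμ, StieltjesFunction.measure_Ioc, hs, hs]
  have := (h1 ▸ (h2.trans h3)).trans_eq h4
  exact (ENNReal.ofReal_le_ofReal_iff (sub_nonneg.2 (hk hcd))).1 this


lemma local_bound {σ : ℝ → ℝ} (hσlip : LocallyLipschitz σ) {α : ℝ} (hα : 0 < α)
    (hderiv : ∀ᵐ s : ℝ, DifferentiableAt ℝ σ s → α ≤ deriv σ s) (x : ℝ) :
    ∃ ε > 0, ∀ c d, c ∈ ball x ε → d ∈ ball x ε → c ≤ d → α * (d - c) ≤ σ d - σ c := by
  obtain ⟨K, t, ht, hKt⟩ := hσlip x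
  obtain ⟨ε, hε, hball⟩ := Metric.mem_nhds_iff.1 ht
  refine ⟨ε / 2, by positivity, ?_⟩
  have hIcc : Icc (x - ε / 2) (x + ε / 2) ⊆ t := by
    rw [← Real.closedBall_eq_Icc]
    exact (closedBall_subset_ball (by linarith)).trans hball
  obtain ⟨g, hg, hgeq⟩ := (hKt.mono hIcc).extend_real
  set k : ℝ → ℝ := fun y => g y + K * y with hkdef
  have hk : Monotone k := by
    intro a b hab
    have := hg.dist_le_mul a b
    rw [Real.dist_eq, Real.dist_eq] at this
    have h2 : g a - g b ≤ K * (b - a) := by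
      have := (abs_le.1 this).2
      rw [abs_of_nonpos (by linarith : a - b ≤ 0)] at this
      linarith
    simp only [hkdef]
    nlinarith
  have hcont : Continuous k := hg.continuous.add (continuous_const.mul continuous_id)
  intro c d hc hd hcd
  have hsub : ball x (ε / 2) ⊆ Icc (x - ε / 2) (x + ε / 2) := by
    rw [← Real.closedBall_eq_Icc]; exact ball_subset_closedBall
  -- a.e. derivative bound for k on the Ioo
  have hae : ∀ᵐ z, z ∈ Ioo c d →
      ENNReal.ofReal (α + K) ≤ hk.stieltjesFunction.measure.rnDeriv volume z := by
    filter_upwards [hderiv, hk.ae_hasDerivAt] with z hz hkz hzmem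
    have hzball : z ∈ ball x (ε / 2) := by
      rw [mem_ball, Real.dist_eq, abs_lt]
      rw [mem_ball, Real.dist_eq, abs_lt] at hc hd
      obtain ⟨h1, h2⟩ := hzmem
      constructor <;> nlinarith [hc.1, hc.2, hd.1, hd.2]
    have hzIoo : z ∈ Ioo (x - ε / 2) (x + ε / 2) := by
      rw [Real.ball_eq_Ioo] at hzball; exact hzball
    have hnhds : Icc (x - ε / 2) (x + ε / 2) ∈ nhds z := Icc_mem_nhds hzIoo.1 hzIoo.2
    have heq : σ =ᶠ[nhds z] g := Filter.eventuallyEq_of_mem hnhds hgeq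
    -- translate the HasDerivAt for k into the rnDeriv bound
    have hdk : DifferentiableAt ℝ k z := hkz.differentiableAt
    have hdg : DifferentiableAt ℝ g z := by
      have : g = fun y => k y - K * y := by funext y; simp [hkdef]
      rw [this]
      exact hdk.sub (by fun_prop)
    have hdσ : DifferentiableAt ℝ σ z := heq.differentiableAt_iff.2 hdg
    have hσg : deriv σ z = deriv g z := heq.deriv_eq
    have hkderiv : deriv k z = deriv g z + K := by
      rw [hkdef]
      rw [deriv_fun_add hdg (by fun_prop)]
      congr 1
      simpa using ((hasDerivAt_id z).const_mul (K:ℝ)).deriv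
    have hbound : α + (K : ℝ) ≤ deriv k z := by
      have := hz hdσ
      rw [hσg] at this
      rw [hkderiv]; linarith
    have : deriv k z = (hk.stieltjesFunction.measure.rnDeriv volume z).toReal := hkz.deriv.symm ▸ rfl
    rw [this] at hbound
    have hne : hk.stieltjesFunction.measure.rnDeriv volume z ≠ ⊤ := by
      intro h
      rw [h] at hbound
      simp at hbound
      linarith [NNReal.coe_nonneg K]
    rw [← ENNReal.ofReal_toReal hne]
    exact ENNReal.ofReal_le_ofReal hbound
  have := core_stieltjes hk hcont hcd (by positivity) hae
  have hgc : g c = σ c := (hgeq (hsub hc)).symm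
  have hgd : g d = σ d := (hgeq (hsub hd)).symm
  simp only [hkdef] at this
  rw [hgc, hgd] at this
  nlinarith

lemma global_bound {σ : ℝ → ℝ} (hσlip : LocallyLipschitz σ) {α : ℝ} (hα : 0 < α)
    (hderiv : ∀ᵐ s : ℝ, DifferentiableAt ℝ σ s → α ≤ deriv σ s) :
    ∀ a b : ℝ, a ≤ b → α * (b - a) ≤ σ b - σ a := by
  intro a b hab
  set s : Set ℝ := {y | α * (y - a) ≤ σ y - σ a} with hsdef
  have hscl : IsClosed s :=
    isClosed_le (by continuity) ((hσlip.continuous.sub continuous_const))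
  have key : Icc a b ⊆ s := by
    apply IsClosed.Icc_subset_of_forall_mem_nhdsWithin (hscl.inter isClosed_Icc)
    · simp [hsdef]
    · rintro y ⟨hys, hy⟩
      obtain ⟨ε, hε, hloc⟩ := local_bound hσlip hα hderiv y
      have : Ico y (y + ε) ⊆ s := by
        rintro z ⟨hz1, hz2⟩
        have h1 : α * (z - y) ≤ σ z - σ y := by
          apply hloc y z (mem_ball_self hε) _ hz1
          rw [mem_ball, Real.dist_eq, abs_lt]
          constructor <;> linarith
        have h2 : α * (y - a) ≤ σ y - σ a := hys
        simp only [hsdef, mem_setOf_eq]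
        linarith
      exact Filter.mem_of_superset (Ico_mem_nhdsGT_of_mem ⟨le_refl y, by linarith⟩) this
  exact key ⟨hab, le_refl b⟩

lemma pointwise_bound {σ : ℝ → ℝ} (hσlip : LocallyLipschitz σ) {α : ℝ} (hα : 0 < α)
    (hderiv : ∀ᵐ s : ℝ, DifferentiableAt ℝ σ s → α ≤ deriv σ s) (p q : ℝ) :
    α * (p - q) ^ 2 ≤ (σ p - σ q) * (p - q) := by
  rcases le_total q p with h | h
  · nlinarith [global_bound hσlip hα hderiv q p h]
  · nlinarith [global_bound hσlip hα hderiv p q h]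

/-- **Strong monotonicity of Nemytskii operators** (Proposition 3.10 of the paper).
Let `D ⊂ ℝ^d` be bounded, measurable, of positive measure, and let `σ : ℝ → ℝ` be locally
Lipschitz with `|σ(s)| ≤ C₁|s| + C₂` and `σ'(s) ≥ α > 0` almost everywhere (wherever the
derivative exists).  Then the Nemytskii operator `F^σ(u) = σ ∘ u` maps `L²(D;ℝ)` into itself and
is strongly monotone with constant `α`. -/
theorem nemytskii_operator_is_strongly_monotone
    {d : ℕ} (D : Set (EuclideanSpace ℝ (Fin d)))
    (hDmeas : MeasurableSet D) (hDbdd : Bornology.IsBounded D) (hDpos : 0 < volume D)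
    (σ : ℝ → ℝ) (hσlip : LocallyLipschitz σ)
    (C₁ C₂ : ℝ) (hC₁ : 0 ≤ C₁) (hC₂ : 0 ≤ C₂)
    (hgrowth : ∀ s : ℝ, |σ s| ≤ C₁ * |s| + C₂)
    (α : ℝ) (hα : 0 < α)
    (hderiv : ∀ᵐ s : ℝ, DifferentiableAt ℝ σ s → α ≤ deriv σ s) :
    -- well-definedness: `σ ∘ u ∈ L²(D;ℝ)` for every `u ∈ L²(D;ℝ)`
    (∀ u : Lp ℝ 2 (volume.restrict D),
      MemLp (fun t => σ (u t)) 2 (volume.restrict D)) ∧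
    -- the Nemytskii operator is strongly monotone with constant `α`
    (∃ F : Lp ℝ 2 (volume.restrict D) → Lp ℝ 2 (volume.restrict D),
      (∀ u, ⇑(F u) =ᵐ[volume.restrict D] fun t => σ (u t)) ∧
      (∀ u v, α * ‖u - v‖ ^ 2 ≤ ⟪F u - F v, u - v⟫)) := by
  set μ := volume.restrict D with hμdef
  haveI : IsFiniteMeasure μ := by
    constructor
    rw [hμdef, Measure.restrict_apply_univ]
    exact hDbdd.measure_lt_top
  have hwell : ∀ u : Lp ℝ 2 μ, MemLp (fun t => σ (u t)) 2 μ := by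
    intro u
    have hmeas : AEStronglyMeasurable (fun t => σ (u t)) μ :=
      hσlip.continuous.comp_aestronglyMeasurable (Lp.aestronglyMeasurable u)
    have hbig : MemLp (fun t => C₁ * ‖u t‖ + C₂) 2 μ :=
      ((Lp.memLp u).norm.const_mul C₁).add (memLp_const C₂)
    refine MemLp.of_le hbig hmeas ?_
    filter_upwards with t
    have h1 := hgrowth (u t)
    have : ‖σ (u t)‖ ≤ C₁ * ‖u t‖ + C₂ := by
      rw [Real.norm_eq_abs]
      simpa [Real.norm_eq_abs] using h1
    refine this.trans ?_
    exact le_abs_self _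
  refine ⟨hwell, ?_⟩
  refine ⟨fun u => (hwell u).toLp _, fun u => MemLp.coeFn_toLp _, ?_⟩
  intro u v
  set F : Lp ℝ 2 μ → Lp ℝ 2 μ := fun u => (hwell u).toLp _ with hFdef
  have key : (0:ℝ) ≤ ⟪F u - F v - α • (u - v), u - v⟫ := by
    rw [MeasureTheory.L2.inner_def]
    refine integral_nonneg_of_ae ?_
    have h1 : ⇑(F u - F v - α • (u - v)) =ᵐ[μ]
        fun t => σ (u t) - σ (v t) - α * (u t - v t) := by
      filter_upwards [Lp.coeFn_sub (F u - F v) (α • (u - v)), Lp.coeFn_sub (F u) (F v),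
        Lp.coeFn_smul α (u - v), Lp.coeFn_sub u v,
        MemLp.coeFn_toLp (hwell u), MemLp.coeFn_toLp (hwell v)] with t e1 e2 e3 e4 e5 e6
      simp only [Pi.sub_apply, Pi.smul_apply, smul_eq_mul] at e1 e2 e3 e4
      rw [e1, e2, e3, e4]
      simp only [hFdef]
      rw [e5, e6]
    have h2 : ⇑(u - v) =ᵐ[μ] fun t => u t - v t := Lp.coeFn_sub u v
    filter_upwards [h1, h2] with t e1 e2
    rw [e1, e2]
    have := pointwise_bound hσlip hα hderiv (u t) (v t)
    simp only [Pi.zero_apply, RCLike.inner_apply, RCLike.conj_to_real]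
    nlinarith
  have hinner : ⟪F u - F v - α • (u - v), u - v⟫
      = ⟪F u - F v, u - v⟫ - α * ⟪u - v, u - v⟫ := by
    rw [inner_sub_left, real_inner_smul_left]
  have hnorm : ⟪u - v, u - v⟫ = ‖u - v‖ ^ 2 := real_inner_self_eq_norm_sq (u - v)
  rw [hinner, hnorm] at key
  linarith
end

section
/- Let X be a real Hilbert space and let F : X → X be a layer of a generalized neural operator, F(x) = x + T₂(G(T₁ x)) with T₁, T₂ compact bounded linear operators and G continuously Fréchet differentiable (bounded and globally Lipschitz). If F is strongly monotone with constant α > 0, then F is a C¹-diffeomorphism of X: F is bijective, its inverse F⁻¹ : X → X is Lipschitz with constant 1/α, and F⁻¹ is continuously Fréchet differentiable. -/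
open scoped RealInnerProductSpace NNReal

set_option maxHeartbeats 2000000 in
/-- **Strongly monotone neural operator layers are `C¹`-diffeomorphisms**
(Lemma 3.11 of the paper).  Let `F(x) = x + T₂(G(T₁ x))` be a layer of a generalized neural
operator on a real Hilbert space `X` (`T₁, T₂` compact bounded linear operators, `G` of class
`C¹`, bounded and globally Lipschitz).  If `F` is strongly monotone with constant `α > 0`, then
`F` is bijective, its inverse is Lipschitz with constant `1/α`, and its inverse is `C¹`. -/
theorem strongly_monotone_neural_operator_layer_is_C1_diffeo
    {X : Type*} [NormedAddCommGroup X] [InnerProductSpace ℝ X] [CompleteSpace X]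
    (T₁ T₂ : X →L[ℝ] X)
    (hT₁ : IsCompactOperator (⇑T₁)) (hT₂ : IsCompactOperator (⇑T₂))
    (G : X → X) (hG : ContDiff ℝ 1 G)
    (hGbdd : ∃ c₀ : ℝ, ∀ x, ‖G x‖ ≤ c₀) (hGlip : ∃ L : ℝ≥0, LipschitzWith L G)
    (F : X → X) (hF : ∀ x, F x = x + T₂ (G (T₁ x)))
    (α : ℝ) (hα : 0 < α)
    (hmono : ∀ x y : X, α * ‖x - y‖ ^ 2 ≤ ⟪F x - F y, x - y⟫) :
    Function.Bijective F ∧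
    ∃ Finv : X → X,
      Function.LeftInverse Finv F ∧ Function.RightInverse Finv F ∧
      (∀ x y : X, ‖Finv x - Finv y‖ ≤ (1 / α) * ‖x - y‖) ∧
      ContDiff ℝ 1 Finv := by
  have hne : Nonempty X := ⟨0⟩
  obtain ⟨L, hGlip⟩ := hGlip
  -- anti-Lipschitz estimate
  have key : ∀ x y : X, α * ‖x - y‖ ≤ ‖F x - F y‖ := by
    intro x y
    rcases eq_or_ne x y with h | h
    · simp [h]
    · have h1 := hmono x y
      have h2 : ⟪F x - F y, x - y⟫ ≤ ‖F x - F y‖ * ‖x - y‖ := real_inner_le_norm _ _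
      have hxy : (0:ℝ) < ‖x - y‖ := by
        rw [norm_pos_iff]; exact sub_ne_zero_of_ne h
      nlinarith
  have hinj : Function.Injective F := by
    intro x y hxy
    have := key x y
    rw [hxy, sub_self, norm_zero] at this
    have : ‖x - y‖ ≤ 0 := by nlinarith
    have : x - y = 0 := by
      rw [← norm_le_zero_iff]; exact this
    exact sub_eq_zero.mp this
  -- Lipschitz estimate for F
  set M : ℝ := 1 + ‖T₂‖ * (L : ℝ) * ‖T₁‖ + α with hM
  have hM0 : 0 < M := by positivity
  have hFM : ∀ x y : X, ‖F x - F y‖ ≤ M * ‖x - y‖ := by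
    intro x y
    have h1 : ‖G (T₁ x) - G (T₁ y)‖ ≤ (L : ℝ) * ‖T₁ x - T₁ y‖ := by
      have := hGlip.dist_le_mul (T₁ x) (T₁ y)
      simpa [dist_eq_norm] using this
    have h2 : ‖T₁ x - T₁ y‖ ≤ ‖T₁‖ * ‖x - y‖ := by
      simpa [map_sub] using T₁.le_opNorm (x - y)
    have h3 : ‖T₂ (G (T₁ x)) - T₂ (G (T₁ y))‖ ≤ ‖T₂‖ * ‖G (T₁ x) - G (T₁ y)‖ := by
      simpa [map_sub] using T₂.le_opNorm (G (T₁ x) - G (T₁ y))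
    have h4 : F x - F y = (x - y) + (T₂ (G (T₁ x)) - T₂ (G (T₁ y))) := by
      rw [hF, hF]; abel
    calc ‖F x - F y‖ ≤ ‖x - y‖ + ‖T₂ (G (T₁ x)) - T₂ (G (T₁ y))‖ := by
          rw [h4]; exact norm_add_le _ _
      _ ≤ M * ‖x - y‖ := by
          have hL0 : (0:ℝ) ≤ (L:ℝ) := L.coe_nonneg
          have hT₂0 : (0:ℝ) ≤ ‖T₂‖ := norm_nonneg _
          have hn0 : (0:ℝ) ≤ ‖x - y‖ := norm_nonneg _
          nlinarith [mul_le_mul_of_nonneg_left h2 (mul_nonneg hT₂0 hL0),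
            mul_le_mul_of_nonneg_left h1 hT₂0, h3]
  -- surjectivity via Banach fixed point
  have hsurj : Function.Surjective F := by
    intro y
    set t : ℝ := α / M ^ 2 with ht
    have htpos : 0 < t := by positivity
    have hMne : M ≠ 0 := ne_of_gt hM0
    have htM : t * M ^ 2 = α := by rw [ht]; field_simp
    have htα : t * α < 1 := by
      have hc : (0:ℝ) ≤ ‖T₂‖ * (L : ℝ) * ‖T₁‖ := by positivity
      have hαM : α < M := by rw [hM]; linarith
      rw [ht, div_mul_eq_mul_div, div_lt_one (by positivity)]
      nlinarith
    have htα0 : 0 < t * α := by positivity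
    set Φ : X → X := fun x => x - t • (F x - y) with hΦ
    have hcontr : ∀ a b : X, ‖Φ a - Φ b‖ ^ 2 ≤ (1 - t * α) * ‖a - b‖ ^ 2 := by
      intro a b
      have hd : Φ a - Φ b = (a - b) - t • (F a - F b) := by
        simp only [hΦ, smul_sub]; abel
      rw [hd, norm_sub_sq_real]
      have hip : ⟪a - b, t • (F a - F b)⟫ = t * ⟪F a - F b, a - b⟫ := by
        rw [real_inner_smul_right, real_inner_comm]
      have hns : ‖t • (F a - F b)‖ ^ 2 = t ^ 2 * ‖F a - F b‖ ^ 2 := by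
        rw [norm_smul]; rw [Real.norm_eq_abs, abs_of_pos htpos]; ring
      rw [hip, hns]
      have h1 := hmono a b
      have h2 := hFM a b
      have h2' : ‖F a - F b‖ ^ 2 ≤ M ^ 2 * ‖a - b‖ ^ 2 := by nlinarith [norm_nonneg (F a - F b), norm_nonneg (a - b)]
      nlinarith [mul_le_mul_of_nonneg_left h1 htpos.le,
        mul_le_mul_of_nonneg_left h2' (sq_nonneg t)]
    set k : ℝ := Real.sqrt (1 - t * α) with hk
    have hk0 : 0 ≤ k := Real.sqrt_nonneg _
    have hk1 : k < 1 := by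
      rw [hk]
      have : 1 - t * α < 1 := by linarith
      nlinarith [Real.sq_sqrt (by linarith : (0:ℝ) ≤ 1 - t * α), Real.sqrt_nonneg (1 - t*α)]
    have hlip : ∀ a b : X, ‖Φ a - Φ b‖ ≤ k * ‖a - b‖ := by
      intro a b
      have h := hcontr a b
      have hk2 : k ^ 2 = 1 - t * α := Real.sq_sqrt (by linarith)
      nlinarith [norm_nonneg (Φ a - Φ b), norm_nonneg (a - b),
        mul_nonneg hk0 (norm_nonneg (a - b))]
    have hcw : ContractingWith ⟨k, hk0⟩ Φ := by
      constructor
      · exact_mod_cast hk1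
      · apply LipschitzWith.of_dist_le_mul
        intro a b
        rw [dist_eq_norm, dist_eq_norm]; exact hlip a b
    set z := hcw.fixedPoint Φ with hzdef
    have hz : Φ z = z := hcw.fixedPoint_isFixedPt
    refine ⟨z, ?_⟩
    have h0 : t • (F z - y) = 0 := by
      have : z - t • (F z - y) = z := hz
      simpa [sub_eq_self] using this
    have : F z - y = 0 := by
      rcases smul_eq_zero.mp h0 with h | h
      · exact absurd h (ne_of_gt htpos)
      · exact h
    exact sub_eq_zero.mp this
  have hbij : Function.Bijective F := ⟨hinj, hsurj⟩
  set Finv : X → X := Function.invFun F with hFinv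
  have hleft : Function.LeftInverse Finv F := Function.leftInverse_invFun hinj
  have hright : Function.RightInverse Finv F := Function.rightInverse_invFun hsurj
  have hlipinv : ∀ x y : X, ‖Finv x - Finv y‖ ≤ (1 / α) * ‖x - y‖ := by
    intro x y
    have h := key (Finv x) (Finv y)
    rw [hright x, hright y] at h
    rw [div_mul_eq_mul_div, le_div_iff₀ hα]
    nlinarith
  -- derivative of F
  set DG : X → (X →L[ℝ] X) := fderiv ℝ G with hDG
  have hGfd := contDiff_one_iff_fderiv.mp hG
  have hGd : ∀ z, HasStrictFDerivAt G (DG z) z := fun z => hG.hasStrictFDerivAt one_ne_zero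
  set A : X → (X →L[ℝ] X) :=
    fun x => ContinuousLinearMap.id ℝ X + (T₂.comp (DG (T₁ x))).comp T₁ with hA
  have hAd : ∀ x, HasStrictFDerivAt F (A x) x := by
    intro x
    have h1 : HasStrictFDerivAt (fun u => T₂ (G (T₁ u))) ((T₂.comp (DG (T₁ x))).comp T₁) x :=
      (T₂.hasStrictFDerivAt.comp (T₁ x) (hGd (T₁ x))).comp x T₁.hasStrictFDerivAt
    have h2 := (hasStrictFDerivAt_id x).add h1
    have hFeq : F = fun u => u + T₂ (G (T₁ u)) := funext hF
    rw [hFeq]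
    exact h2
  -- coercivity of the derivative
  have hAcoer : ∀ x v : X, α * ‖v‖ ^ 2 ≤ ⟪A x v, v⟫ := by
    intro x v
    have hc : HasDerivAt (fun s : ℝ => x + s • v) v 0 := by
      simpa using ((hasDerivAt_id (0:ℝ)).smul_const v).const_add x
    have hFx : HasFDerivAt F (A x) (x + (0:ℝ) • v) := by
      simpa using (hAd x).hasFDerivAt
    have hFc : HasDerivAt (fun s : ℝ => F (x + s • v)) (A x v) 0 :=
      hFx.comp_hasDerivAt 0 hc
    have hg : HasDerivAt (fun s : ℝ => ⟪v, F (x + s • v)⟫) ⟪v, A x v⟫ 0 :=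
      (innerSL ℝ v).hasFDerivAt.comp_hasDerivAt 0 hFc
    rw [hasDerivAt_iff_tendsto_slope] at hg
    have hg' : Filter.Tendsto (slope (fun s : ℝ => ⟪v, F (x + s • v)⟫) 0)
        (nhdsWithin 0 (Set.Ioi 0)) (nhds ⟪v, A x v⟫) :=
      hg.mono_left (nhdsWithin_mono 0 (fun s hs => ne_of_gt hs))
    have hbound : ∀ᶠ s in nhdsWithin (0:ℝ) (Set.Ioi 0),
        α * ‖v‖ ^ 2 ≤ slope (fun s : ℝ => ⟪v, F (x + s • v)⟫) 0 s := by
      filter_upwards [self_mem_nhdsWithin] with s hs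
      have hs0 : (0:ℝ) < s := hs
      have hm := hmono (x + s • v) x
      have hsub : (x + s • v) - x = s • v := by abel
      rw [hsub] at hm
      have hip : ⟪F (x + s • v) - F x, s • v⟫
          = s * (⟪v, F (x + s • v)⟫ - ⟪v, F x⟫) := by
        rw [real_inner_smul_right, real_inner_comm, inner_sub_right]
      have hns : ‖s • v‖ ^ 2 = s ^ 2 * ‖v‖ ^ 2 := by
        rw [norm_smul, Real.norm_eq_abs, mul_pow, sq_abs]
      rw [hip, hns] at hm
      have hslope : slope (fun s : ℝ => ⟪v, F (x + s • v)⟫) 0 s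
          = (⟪v, F (x + s • v)⟫ - ⟪v, F x⟫) / s := by
        rw [slope_def_field]; simp
      rw [hslope, le_div_iff₀ hs0]
      nlinarith
    have := ge_of_tendsto hg' hbound
    have hcomm : ⟪v, A x v⟫ = ⟪A x v, v⟫ := real_inner_comm _ _
    linarith [hcomm ▸ this]
  have hcoercive : ∀ x : X, IsCoercive ((innerSL ℝ).comp (A x)) := by
    intro x
    refine ⟨α, hα, fun u => ?_⟩
    have := hAcoer x u
    simp only [ContinuousLinearMap.comp_apply, innerSL_apply_apply]
    nlinarith [this]
  set e : X → (X ≃L[ℝ] X) := fun x => (hcoercive x).continuousLinearEquivOfBilin with he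
  have hecoe : ∀ x : X, ((e x : X ≃L[ℝ] X) : X →L[ℝ] X) = A x := by
    intro x
    ext v
    apply ext_inner_right ℝ
    intro w
    show ⟪(e x) v, w⟫ = _
    simp only [he]
    rw [(hcoercive x).continuousLinearEquivOfBilin_apply v w]
    simp [ContinuousLinearMap.comp_apply, innerSL_apply_apply]
  have hstrict : ∀ x : X, HasStrictFDerivAt F (((e x : X ≃L[ℝ] X)) : X →L[ℝ] X) x := by
    intro x; rw [hecoe x]; exact hAd x
  have hinvd : ∀ y : X,
      HasStrictFDerivAt Finv (((e (Finv y)).symm : X ≃L[ℝ] X) : X →L[ℝ] X) y := by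
    intro y
    have h := (hstrict (Finv y)).to_local_left_inverse
      (g := Finv) (Filter.Eventually.of_forall (fun u => hleft u))
    rwa [hright y] at h
  have hdiff : Differentiable ℝ Finv := fun y => (hinvd y).differentiableAt
  have hfderiv : ∀ y : X, fderiv ℝ Finv y = Ring.inverse (A (Finv y)) := by
    intro y
    rw [(hinvd y).hasFDerivAt.fderiv, ← hecoe (Finv y),
      ContinuousLinearMap.ringInverse_eq_inverse, ContinuousLinearMap.inverse_equiv]
  have hAcont : Continuous A := by
    have h1 : Continuous DG := hGfd.2
    have h2 : Continuous fun x => T₂.comp (DG (T₁ x)) :=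
      ((ContinuousLinearMap.compL ℝ X X X T₂).continuous).comp (h1.comp T₁.continuous)
    have h3 : Continuous fun x => (T₂.comp (DG (T₁ x))).comp T₁ :=
      (((ContinuousLinearMap.compL ℝ X X X).flip T₁).continuous).comp h2
    exact continuous_const.add h3
  have hFinvcont : Continuous Finv := by
    apply LipschitzWith.continuous (K := Real.toNNReal (1/α))
    apply LipschitzWith.of_dist_le_mul
    intro a b
    have := hlipinv a b
    rw [dist_eq_norm, dist_eq_norm]
    calc ‖Finv a - Finv b‖ ≤ (1/α) * ‖a - b‖ := this
      _ ≤ (Real.toNNReal (1/α) : ℝ) * ‖a - b‖ := by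
          gcongr
          exact (Real.le_coe_toNNReal _)
  have hcontfd : Continuous (fderiv ℝ Finv) := by
    rw [continuous_iff_continuousAt]
    intro y
    have heq : fderiv ℝ Finv = (fun B => Ring.inverse B) ∘ A ∘ Finv := by
      funext u; exact hfderiv u
    rw [heq]
    have hunit : ContinuousAt Ring.inverse (A (Finv y)) := by
      have : A (Finv y) = ((e (Finv y)).toUnit : X →L[ℝ] X) := by
        rw [← hecoe (Finv y)]; rfl
      rw [this]
      exact NormedRing.inverse_continuousAt ((e (Finv y)).toUnit)
    exact ContinuousAt.comp hunit ((hAcont.comp hFinvcont).continuousAt)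
  exact ⟨hbij, Finv, hleft, hright, hlipinv,
    contDiff_one_iff_fderiv.mpr ⟨hdiff, hcontfd⟩⟩
end

section
/- Let X be a real Hilbert space, let T₁, T₂ : X → X be nonzero compact bounded linear operators, and let G : X → X be continuously Fréchet differentiable. Suppose the Fréchet derivative of G satisfies ‖DG|_x‖_{X→X} ≤ (1/2)·‖T₁‖_{X→X}⁻¹·‖T₂‖_{X→X}⁻¹ for all x ∈ X. Then the map F : X → X, F(u) = u + T₂(G(T₁ u)), is strongly monotone with constant 1/2. -/
open scoped RealInnerProductSpace

/-- **A sufficient condition for strong monotonicity of a neural operator layer**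
(Lemma 3.13 of the paper).  If `T₁, T₂ : X → X` are nonzero compact bounded linear operators,
`G : X → X` is `C¹` and `‖DG|_x‖ ≤ (1/2)‖T₁‖⁻¹‖T₂‖⁻¹` for all `x`, then
`F(u) = u + T₂(G(T₁ u))` is strongly monotone with constant `1/2`. -/
theorem neural_operator_layer_strongly_monotone_of_small_derivative
    {X : Type*} [NormedAddCommGroup X] [InnerProductSpace ℝ X] [CompleteSpace X]
    (T₁ T₂ : X →L[ℝ] X)
    (hT₁c : IsCompactOperator (⇑T₁)) (hT₂c : IsCompactOperator (⇑T₂))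
    (hT₁ : T₁ ≠ 0) (hT₂ : T₂ ≠ 0)
    (G : X → X) (hG : ContDiff ℝ 1 G)
    (hDG : ∀ x : X, ‖fderiv ℝ G x‖ ≤ (1 / 2) * ‖T₁‖⁻¹ * ‖T₂‖⁻¹) :
    ∀ x y : X, (1 / 2) * ‖x - y‖ ^ 2 ≤
      ⟪(x + T₂ (G (T₁ x))) - (y + T₂ (G (T₁ y))), x - y⟫ := by
  intro x y
  have hdiff : Differentiable ℝ G := hG.differentiable one_ne_zero
  have hT1 : (0:ℝ) < ‖T₁‖ := norm_pos_iff.mpr hT₁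
  have hT2 : (0:ℝ) < ‖T₂‖ := norm_pos_iff.mpr hT₂
  have hLipG : ‖G (T₁ x) - G (T₁ y)‖ ≤ (1/2) * ‖T₁‖⁻¹ * ‖T₂‖⁻¹ * ‖T₁ x - T₁ y‖ :=
    Convex.norm_image_sub_le_of_norm_fderiv_le
      (fun z _ => hdiff z)
      (fun z _ => hDG z) convex_univ (Set.mem_univ _) (Set.mem_univ _)
  have hT1b : ‖T₁ x - T₁ y‖ ≤ ‖T₁‖ * ‖x - y‖ := by
    rw [← map_sub]; exact T₁.le_opNorm _
  have hTG : ‖T₂ (G (T₁ x)) - T₂ (G (T₁ y))‖ ≤ (1/2) * ‖x - y‖ := by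
    rw [← map_sub]
    calc ‖T₂ (G (T₁ x) - G (T₁ y))‖ ≤ ‖T₂‖ * ‖G (T₁ x) - G (T₁ y)‖ := T₂.le_opNorm _
      _ ≤ ‖T₂‖ * ((1/2) * ‖T₁‖⁻¹ * ‖T₂‖⁻¹ * (‖T₁‖ * ‖x - y‖)) := by
          apply mul_le_mul_of_nonneg_left _ hT2.le
          exact hLipG.trans (by
            apply mul_le_mul_of_nonneg_left hT1b
            positivity)
      _ = (1/2) * ‖x - y‖ := by field_simp
  have hinner : ⟪T₂ (G (T₁ x)) - T₂ (G (T₁ y)), x - y⟫ ≥ -((1/2) * ‖x - y‖ * ‖x - y‖) := by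
    have := abs_real_inner_le_norm (T₂ (G (T₁ x)) - T₂ (G (T₁ y))) (x - y)
    have h2 : ‖T₂ (G (T₁ x)) - T₂ (G (T₁ y))‖ * ‖x - y‖ ≤ (1/2) * ‖x - y‖ * ‖x - y‖ :=
      mul_le_mul_of_nonneg_right hTG (norm_nonneg _)
    nlinarith [abs_nonneg (⟪T₂ (G (T₁ x)) - T₂ (G (T₁ y)), x - y⟫),
      neg_abs_le (⟪T₂ (G (T₁ x)) - T₂ (G (T₁ y)), x - y⟫)]
  have key : (x + T₂ (G (T₁ x))) - (y + T₂ (G (T₁ y)))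
      = (x - y) + (T₂ (G (T₁ x)) - T₂ (G (T₁ y))) := by abel
  rw [key, inner_add_left, real_inner_self_eq_norm_sq]
  nlinarith [hinner, sq_nonneg ‖x - y‖]
end

section
/- Let X be a real Hilbert space and let F : X → X be a layer of a generalized neural operator, F(x) = x + T₂(G(T₁ x)) with T₁, T₂ compact bounded linear operators and G continuous. Then for every r > 0 and ε > 0 there exists a finite-dimensional subspace V₀ ⊆ X such that for every finite-dimensional subspace V with V₀ ⊆ V one has sup_{x ∈ B̄_X(0,r)} ‖(Id − P_V)(T₂(G(T₁ x)))‖ ≤ ε; in particular, for such V, sup_{x ∈ V ∩ B̄_X(0,r)} ‖P_V(F(x)) − F(x)‖ ≤ ε, i.e., the linear discretizations P_V ∘ F|_V converge to F uniformly on bounded sets as V grows. -/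
open Metric
open scoped RealInnerProductSpace

/-- The orthogonal projection onto a finite-dimensional subspace `W`, viewed as a continuous
linear map `X → X`. -/
noncomputable def projFD {X : Type*} [NormedAddCommGroup X] [InnerProductSpace ℝ X]
    [CompleteSpace X] (W : Submodule ℝ X) (hW : FiniteDimensional ℝ W) : X →L[ℝ] X :=
  haveI := hW
  W.subtypeL.comp W.orthogonalProjection

/-- The orthogonal projection is the best approximation: `‖y - P_V y‖ ≤ ‖y - c‖` for `c ∈ V`. -/
lemma projFD_best {X : Type*} [NormedAddCommGroup X] [InnerProductSpace ℝ X]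
    [CompleteSpace X] (V : Submodule ℝ X) (hV : FiniteDimensional ℝ V) (y c : X)
    (hc : c ∈ V) : ‖y - projFD V hV y‖ ≤ ‖y - c‖ := by
  haveI := hV
  have h : ‖y - (V.orthogonalProjection y : X)‖ = ⨅ x : V, ‖y - x‖ :=
    Submodule.starProjection_minimal y
  have hle : (⨅ x : V, ‖y - (x : X)‖) ≤ ‖y - c‖ := by
    have : BddBelow (Set.range fun x : V => ‖y - (x : X)‖) :=
      ⟨0, by rintro _ ⟨x, rfl⟩; positivity⟩
    exact ciInf_le this ⟨c, hc⟩
  simpa [projFD] using h ▸ hle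

/-- **Linear discretizations of neural operator layers converge uniformly on bounded sets.**
Let `F(x) = x + T₂(G(T₁ x))` be a layer of a generalized neural operator (`T₁, T₂` compact,
`G` continuous).  For all `r, ε > 0` there is a finite-dimensional subspace `V₀ ⊆ X` such that
for every finite-dimensional `V ⊇ V₀` we have
`sup_{x ∈ B̄(0,r)} ‖(Id − P_V)(T₂(G(T₁ x)))‖ ≤ ε`, and consequently
`sup_{x ∈ V ∩ B̄(0,r)} ‖P_V(F x) − F x‖ ≤ ε`. -/
theorem linear_discretizations_of_layer_converge_uniformly
    {X : Type*} [NormedAddCommGroup X] [InnerProductSpace ℝ X] [CompleteSpace X]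
    (T₁ T₂ : X →L[ℝ] X)
    (hT₁ : IsCompactOperator (⇑T₁)) (hT₂ : IsCompactOperator (⇑T₂))
    (G : X → X) (hG : Continuous G)
    (F : X → X) (hF : ∀ x, F x = x + T₂ (G (T₁ x)))
    (r ε : ℝ) (hr : 0 < r) (hε : 0 < ε) :
    ∃ V₀ : Submodule ℝ X, FiniteDimensional ℝ V₀ ∧
      ∀ (V : Submodule ℝ X) (hV : FiniteDimensional ℝ V), V₀ ≤ V →
        (∀ x ∈ closedBall (0:X) r,
          ‖T₂ (G (T₁ x)) - projFD V hV (T₂ (G (T₁ x)))‖ ≤ ε) ∧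
        (∀ x ∈ closedBall (0:X) r, x ∈ V → ‖projFD V hV (F x) - F x‖ ≤ ε) := by
  -- The set of outputs `T₂ (G (T₁ x))` for `x` in the ball is contained in a compact set.
  obtain ⟨K₁, hK₁c, hK₁⟩ := hT₁.image_closedBall_subset_compact (𝕜₁ := ℝ) r
  set K : Set X := T₂ '' (G '' K₁) with hK
  have hKc : IsCompact K := (hK₁c.image hG).image T₂.continuous
  have hmem : ∀ x ∈ closedBall (0:X) r, T₂ (G (T₁ x)) ∈ K := by
    intro x hx
    exact ⟨G (T₁ x), ⟨T₁ x, hK₁ ⟨x, hx, rfl⟩, rfl⟩, rfl⟩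
  -- Cover `K` by finitely many `ε`-balls with centers `t`.
  obtain ⟨t, hts, htfin, htc⟩ := hKc.elim_finite_subcover_image (c := fun c : X => ball c ε) (b := K)
    (fun c _ => isOpen_ball)
    (fun y hy => Set.mem_iUnion₂.2 ⟨y, hy, mem_ball_self hε⟩)
  refine ⟨Submodule.span ℝ t, FiniteDimensional.span_of_finite ℝ htfin, ?_⟩
  intro V hV hVle
  have key : ∀ x ∈ closedBall (0:X) r,
      ‖T₂ (G (T₁ x)) - projFD V hV (T₂ (G (T₁ x)))‖ ≤ ε := by
    intro x hx
    set y := T₂ (G (T₁ x))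
    have hy : y ∈ K := hmem x hx
    obtain ⟨c, hct, hyc⟩ := Set.mem_iUnion₂.1 (htc hy)
    have hcV : c ∈ V := hVle (Submodule.subset_span hct)
    calc ‖y - projFD V hV y‖ ≤ ‖y - c‖ := projFD_best V hV y c hcV
      _ ≤ ε := (mem_ball_iff_norm.1 hyc).le
  refine ⟨key, ?_⟩
  intro x hx hxV
  have hPx : projFD V hV x = x := by
    haveI := hV
    exact (Submodule.starProjection_eq_self_iff (K := V)).2 hxV
  have : projFD V hV (F x) - F x
      = -(T₂ (G (T₁ x)) - projFD V hV (T₂ (G (T₁ x)))) := by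
    rw [hF, map_add, hPx]; abel
  rw [this, norm_neg]
  exact key x hx
end

section
/- Let X be a separable real Hilbert space with orthonormal basis (φ_n)_{n∈ℕ}, let δ ∈ (0,1), T, N ∈ ℕ, and for t = 1, …, T let f_t : ℝ^N → ℝ^N be continuously differentiable maps such that each g_t := D_N ∘ f_t ∘ E_N : X → X is Lipschitz with constant at most δ. Then the composition G := (Id + g_T) ∘ ⋯ ∘ (Id + g₁) : X → X is a C¹-diffeomorphism of X: it is bijective, continuously Fréchet differentiable, and its inverse is continuously Fréchet differentiable. In particular each factor Id + g_t is strongly monotone with constant 1 − δ and a C¹-diffeomorphism of X. -/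
open scoped RealInnerProductSpace

/-- The coordinate map `E_N u = (⟨u,φ₁⟩, …, ⟨u,φ_N⟩)` relative to an orthonormal basis `φ`. -/
noncomputable def coordEN {X : Type*} [NormedAddCommGroup X] [InnerProductSpace ℝ X]
    (φ : ℕ → X) (N : ℕ) (u : X) : Fin N → ℝ :=
  fun i => ⟪u, φ (i : ℕ)⟫

/-- The synthesis map `D_N α = Σ_{n ≤ N} α_n φ_n` relative to an orthonormal basis `φ`. -/
noncomputable def synthDN {X : Type*} [NormedAddCommGroup X] [InnerProductSpace ℝ X]
    (φ : ℕ → X) (N : ℕ) (a : Fin N → ℝ) : X :=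
  ∑ i : Fin N, a i • φ (i : ℕ)

/-- `compChain H n = H (n-1) ∘ ⋯ ∘ H 1 ∘ H 0`, the composition of the first `n` maps. -/
def compChain {X : Type*} (H : ℕ → X → X) : ℕ → X → X
  | 0 => id
  | n + 1 => H n ∘ compChain H n




open scoped RealInnerProductSpace NNReal

section Aux
variable {X : Type*} [NormedAddCommGroup X] [InnerProductSpace ℝ X] [CompleteSpace X]

theorem my_block_mono {δ : ℝ} {g : X → X}
    (hlip : ∀ x y : X, ‖g x - g y‖ ≤ δ * ‖x - y‖) (x y : X) :
    (1 - δ) * ‖x - y‖ ^ 2 ≤ ⟪(x + g x) - (y + g y), x - y⟫ := by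
  have h1 : (x + g x) - (y + g y) = (x - y) + (g x - g y) := by abel
  rw [h1, inner_add_left, real_inner_self_eq_norm_sq]
  have h2 : |⟪g x - g y, x - y⟫| ≤ ‖g x - g y‖ * ‖x - y‖ := abs_real_inner_le_norm _ _
  have h3 := hlip x y
  nlinarith [norm_nonneg (x - y), abs_le.1 h2]

theorem my_block_diffeo {K : ℝ≥0} (hK : K < 1) {g : X → X}
    (hg : ContDiff ℝ 1 g) (hlip : LipschitzWith K g) :
    Function.Bijective (fun z : X => z + g z) ∧
      ContDiff ℝ 1 (fun z : X => z + g z) ∧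
      ∃ Hinv : X → X, Function.LeftInverse Hinv (fun z : X => z + g z) ∧
        Function.RightInverse Hinv (fun z : X => z + g z) ∧ ContDiff ℝ 1 Hinv := by
  haveI : Nonempty X := ⟨0⟩
  set H : X → X := fun z => z + g z with hHdef
  have hC1 : ContDiff ℝ 1 H := contDiff_id.add hg
  have hKlt : (K : ℝ) < 1 := hK
  -- injectivity
  have hinj : Function.Injective H := by
    intro x y hxy
    have h1 : x - y = -(g x - g y) := by
      have : x + g x = y + g y := hxy
      have := sub_eq_zero.2 this
      rw [show x + g x - (y + g y) = (x - y) + (g x - g y) by abel] at this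
      linear_combination (norm := abel_nf) this
    have h2 : ‖x - y‖ ≤ K * ‖x - y‖ := by
      calc ‖x - y‖ = ‖g x - g y‖ := by rw [h1, norm_neg]
        _ ≤ K * ‖x - y‖ := by
            have := hlip.dist_le_mul x y
            simpa [dist_eq_norm] using this
    have h3 : ‖x - y‖ = 0 := by nlinarith [norm_nonneg (x - y)]
    exact sub_eq_zero.1 (norm_eq_zero.1 h3)
  -- surjectivity
  have hsurj : Function.Surjective H := by
    intro w
    have hlipF : LipschitzWith K (fun z => w - g z) := by
      apply LipschitzWith.of_dist_le_mul
      intro x y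
      rw [dist_sub_left]
      exact hlip.dist_le_mul x y
    have hcF : ContractingWith K (fun z => w - g z) := ⟨hK, hlipF⟩
    refine ⟨hcF.fixedPoint, ?_⟩
    have hz : w - g hcF.fixedPoint = hcF.fixedPoint := hcF.fixedPoint_isFixedPt
    show hcF.fixedPoint + g hcF.fixedPoint = w
    exact (sub_eq_iff_eq_add.1 hz).symm
  -- derivatives
  have hdiff : Differentiable ℝ g := hg.differentiable one_ne_zero
  have hdn : ∀ a : X, ‖-(fderiv ℝ g a)‖ < 1 := by
    intro a
    rw [norm_neg]
    exact lt_of_le_of_lt (norm_fderiv_le_of_lipschitz ℝ hlip) hKlt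
  let e : X → (X ≃L[ℝ] X) := fun a =>
    ContinuousLinearEquiv.ofUnit (Units.oneSub (-(fderiv ℝ g a)) (hdn a))
  have hec : ∀ a : X, (e a : X →L[ℝ] X) = ContinuousLinearMap.id ℝ X + fderiv ℝ g a := by
    intro a
    show (1 : X →L[ℝ] X) - -(fderiv ℝ g a) = _
    rw [sub_neg_eq_add]; rfl
  have hH' : ∀ a : X, HasFDerivAt H ((e a : X →L[ℝ] X)) a := by
    intro a
    rw [hec a]
    exact (hasFDerivAt_id a).add (hdiff a).hasFDerivAt
  -- inverse
  refine ⟨⟨hinj, hsurj⟩, hC1, Function.invFun H, Function.leftInverse_invFun hinj,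
    Function.rightInverse_invFun hsurj, ?_⟩
  have hri : Function.RightInverse (Function.invFun H) H := Function.rightInverse_invFun hsurj
  rw [contDiff_iff_contDiffAt]
  intro y
  set a := Function.invFun H y with ha
  have hya : y = H a := (hri y).symm
  rw [hya]
  have hca : ContDiffAt ℝ 1 H a := hC1.contDiffAt
  have hli := hca.to_localInverse (f' := e a) (hH' a) one_ne_zero
  refine hli.congr_of_eventuallyEq ?_
  have hev := (hca.hasStrictFDerivAt' (hH' a) one_ne_zero).eventually_right_inverse
  refine hev.mono fun z hz => ?_
  exact hinj ((hri z).trans hz.symm)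

end Aux

set_option linter.unusedSectionVars false in
theorem my_chain_diffeo {X : Type*} [NormedAddCommGroup X] [InnerProductSpace ℝ X]
    (H : ℕ → X → X) (T : ℕ)
    (h : ∀ t < T, Function.Bijective (H t) ∧ ContDiff ℝ 1 (H t) ∧
      ∃ Hinv : X → X, Function.LeftInverse Hinv (H t) ∧ Function.RightInverse Hinv (H t) ∧
        ContDiff ℝ 1 Hinv) :
    Function.Bijective (compChain H T) ∧ ContDiff ℝ 1 (compChain H T) ∧
      ∃ Ginv : X → X, Function.LeftInverse Ginv (compChain H T) ∧
        Function.RightInverse Ginv (compChain H T) ∧ ContDiff ℝ 1 Ginv := by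
  induction T with
  | zero =>
    exact ⟨Function.bijective_id, contDiff_id, id, fun x => rfl, fun x => rfl, contDiff_id⟩
  | succ n ih =>
    obtain ⟨hb, hc, Hinv, hl, hr, hci⟩ := h n n.lt_succ_self
    obtain ⟨gb, gc, Ginv, gl, gr, gci⟩ := ih (fun t ht => h t (ht.trans n.lt_succ_self))
    refine ⟨hb.comp gb, hc.comp gc, Ginv ∘ Hinv, ?_, ?_, gci.comp hci⟩
    · intro x
      show Ginv (Hinv (H n (compChain H n x))) = x
      rw [hl, gl]
    · intro x
      show H n (compChain H n (Ginv (Hinv x))) = x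
      rw [gr, hr]

/-- **Residual networks with small `C¹` blocks are `C¹`-diffeomorphisms of Hilbert space**
(cf. Lemma B.3 / Remark 3.18 of the paper).  Let `X` be a separable real Hilbert space with
orthonormal basis `(φ_n)`, `δ ∈ (0,1)`, and let `f₁, …, f_T : ℝ^N → ℝ^N` be `C¹` maps such
that each `g_t = D_N ∘ f_t ∘ E_N` is `δ`-Lipschitz.  Then
`G = (Id + g_T) ∘ ⋯ ∘ (Id + g₁)` is a `C¹`-diffeomorphism of `X`, and each factor `Id + g_t`
is strongly monotone with constant `1 − δ` and a `C¹`-diffeomorphism of `X`. -/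
theorem residual_network_is_C1_diffeomorphism
    {X : Type*} [NormedAddCommGroup X] [InnerProductSpace ℝ X] [CompleteSpace X]
    (φ : ℕ → X) (hφ : Orthonormal ℝ φ)
    (hφtotal : (Submodule.span ℝ (Set.range φ)).topologicalClosure = ⊤)
    (δ : ℝ) (hδ : δ ∈ Set.Ioo (0:ℝ) 1)
    (T N : ℕ) (f : ℕ → (Fin N → ℝ) → (Fin N → ℝ))
    (hf : ∀ t < T, ContDiff ℝ 1 (f t))
    (hlip : ∀ t < T, ∀ x y : X,
      ‖synthDN φ N (f t (coordEN φ N x)) - synthDN φ N (f t (coordEN φ N y))‖ ≤ δ * ‖x - y‖) :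
    -- the full residual network is a `C¹`-diffeomorphism of `X`
    (Function.Bijective (compChain (fun t z => z + synthDN φ N (f t (coordEN φ N z))) T) ∧
     ContDiff ℝ 1 (compChain (fun t z => z + synthDN φ N (f t (coordEN φ N z))) T) ∧
     ∃ Ginv : X → X,
       Function.LeftInverse Ginv (compChain (fun t z => z + synthDN φ N (f t (coordEN φ N z))) T) ∧
       Function.RightInverse Ginv (compChain (fun t z => z + synthDN φ N (f t (coordEN φ N z))) T) ∧
       ContDiff ℝ 1 Ginv) ∧
    -- each residual block is strongly monotone with constant `1 − δ` and a `C¹`-diffeomorphism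
    (∀ t < T,
      (∀ x y : X, (1 - δ) * ‖x - y‖ ^ 2 ≤
        ⟪(x + synthDN φ N (f t (coordEN φ N x))) - (y + synthDN φ N (f t (coordEN φ N y))),
          x - y⟫) ∧
      Function.Bijective (fun z : X => z + synthDN φ N (f t (coordEN φ N z))) ∧
      ContDiff ℝ 1 (fun z : X => z + synthDN φ N (f t (coordEN φ N z))) ∧
      ∃ Hinv : X → X,
        Function.LeftInverse Hinv (fun z : X => z + synthDN φ N (f t (coordEN φ N z))) ∧
        Function.RightInverse Hinv (fun z : X => z + synthDN φ N (f t (coordEN φ N z))) ∧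
        ContDiff ℝ 1 Hinv) := by
  obtain ⟨hδ0, hδ1⟩ := hδ
  have hKlt : δ.toNNReal < 1 := by
    rw [← NNReal.coe_lt_coe, Real.coe_toNNReal δ hδ0.le, NNReal.coe_one]
    exact hδ1
  -- each block g t is C¹
  have hgC1 : ∀ t < T, ContDiff ℝ 1 (fun z : X => synthDN φ N (f t (coordEN φ N z))) := by
    intro t ht
    have hE : ContDiff ℝ 1 (coordEN φ N : X → Fin N → ℝ) := by
      apply contDiff_pi.2
      intro i
      exact (contDiff_id.inner ℝ contDiff_const)
    have hD : ContDiff ℝ 1 (synthDN φ N : (Fin N → ℝ) → X) := by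
      unfold synthDN
      apply ContDiff.sum
      intro i _
      exact (contDiff_apply ℝ ℝ i).smul contDiff_const
    exact hD.comp ((hf t ht).comp hE)
  have hglip : ∀ t < T, LipschitzWith δ.toNNReal
      (fun z : X => synthDN φ N (f t (coordEN φ N z))) := by
    intro t ht
    apply LipschitzWith.of_dist_le_mul
    intro x y
    rw [dist_eq_norm, dist_eq_norm, Real.coe_toNNReal δ hδ0.le]
    exact hlip t ht x y
  constructor
  · exact my_chain_diffeo _ T fun t ht =>
      my_block_diffeo hKlt (hgC1 t ht) (hglip t ht)
  · intro t ht
    exact ⟨my_block_mono (hlip t ht), my_block_diffeo hKlt (hgC1 t ht) (hglip t ht)⟩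
end
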